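/- arXiv:1103.2288 — 7 statements merged into one kernel-verified Lean document; each statement's English description precedes it below -/
import Mathlib

section
/- The sequence W →(d⁰) V →(d¹) Q →(d²) X → 0 is exact, i.e. the image of d⁰ equals the kernel of d¹, the image of d¹ equals the kernel of d², and d² is surjective. -/
open TensorProduct

private lemma stmt0_pderiv_comm (i j : Fin 2) (f : MvPolynomial (Fin 2) ℂ) :
    MvPolynomial.pderiv i (MvPolynomial.pderiv j f)
      = MvPolynomial.pderiv j (MvPolynomial.pderiv i f) := by
  induction f using MvPolynomial.induction_on with
  | C a => simp
  | add p q hp hq => simp [hp, hq]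
  | mul_X q n hq =>
      simp only [MvPolynomial.pderiv_mul, map_add, hq, MvPolynomial.pderiv_X, Pi.single_apply]
      split_ifs <;> simp <;> ring

private lemma stmt0_decomp (n : ℕ) (a : ℂ) (P : Polynomial ℂ)
    (hP : P.degree ≤ ((n : ℕ) + 1 : ℕ)) :
    ∃ q : Polynomial ℂ, q.degree ≤ (n : ℕ) ∧
      P = Polynomial.C (P.eval a) + (Polynomial.X - Polynomial.C a) * q := by
  have hroot : (P - Polynomial.C (P.eval a)).IsRoot a := by simp [Polynomial.IsRoot]
  obtain ⟨q, hq⟩ := (Polynomial.dvd_iff_isRoot.mpr hroot)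
  refine ⟨q, ?_, by linear_combination hq⟩
  by_cases h : q = 0
  · simp [h]
  · have hdq : ((Polynomial.X - Polynomial.C a) * q).degree ≤ ((n + 1 : ℕ) : WithBot ℕ) := by
      rw [← hq]
      exact le_trans (Polynomial.degree_sub_le _ _)
        (max_le hP (le_trans Polynomial.degree_C_le (by exact_mod_cast Nat.zero_le _)))
    rw [Polynomial.degree_mul, Polynomial.degree_X_sub_C, Polynomial.degree_eq_natDegree h] at hdq
    rw [← Polynomial.natDegree_le_iff_degree_le]
    have : 1 + q.natDegree ≤ n + 1 := by exact_mod_cast hdq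
    omega

private lemma stmt0_mapmap {R : Type*} [CommRing R]
    {M N M' N' M'' N'' : Type*}
    [AddCommGroup M] [AddCommGroup N] [AddCommGroup M'] [AddCommGroup N']
    [AddCommGroup M''] [AddCommGroup N'']
    [Module R M] [Module R N] [Module R M'] [Module R N'] [Module R M''] [Module R N'']
    (f₂ : M' →ₗ[R] M'') (g₂ : N' →ₗ[R] N'') (f₁ : M →ₗ[R] M') (g₁ : N →ₗ[R] N')
    (x : M ⊗[R] N) :
    TensorProduct.map f₂ g₂ (TensorProduct.map f₁ g₁ x)
      = TensorProduct.map (f₂.comp f₁) (g₂.comp g₁) x := by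
  rw [TensorProduct.map_comp]; rfl

private lemma stmt0_mapzeroR {R : Type*} [CommRing R]
    {M N M' N' : Type*}
    [AddCommGroup M] [AddCommGroup N] [AddCommGroup M'] [AddCommGroup N']
    [Module R M] [Module R N] [Module R M'] [Module R N']
    (f : M →ₗ[R] M') :
    TensorProduct.map f (0 : N →ₗ[R] N') = 0 :=
  TensorProduct.ext' fun x y => by simp

private lemma stmt0_mapnegR {R : Type*} [CommRing R]
    {M N M' N' : Type*}
    [AddCommGroup M] [AddCommGroup N] [AddCommGroup M'] [AddCommGroup N']
    [Module R M] [Module R N] [Module R M'] [Module R N']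
    (f : M →ₗ[R] M') (g : N →ₗ[R] N') :
    TensorProduct.map f (-g) = -(TensorProduct.map f g) :=
  TensorProduct.ext' fun x y => by simp [TensorProduct.tmul_neg]

private lemma stmt0_mapneg_apply {R : Type*} [CommRing R]
    {M N M' N' : Type*}
    [AddCommGroup M] [AddCommGroup N] [AddCommGroup M'] [AddCommGroup N']
    [Module R M] [Module R N] [Module R M'] [Module R N']
    (f : M →ₗ[R] M') (g : N →ₗ[R] N') (x : M ⊗[R] N) :
    TensorProduct.map f (-g) x = -(TensorProduct.map f g x) := by
  rw [stmt0_mapnegR]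
  exact LinearMap.neg_apply _ _

private lemma stmt0_mapidid {R : Type*} [CommRing R]
    {M N : Type*} [AddCommGroup M] [AddCommGroup N] [Module R M] [Module R N]
    (x : M ⊗[R] N) :
    TensorProduct.map (LinearMap.id : M →ₗ[R] M) (LinearMap.id : N →ₗ[R] N) x = x := by
  rw [TensorProduct.map_id]
  rfl

set_option maxHeartbeats 1000000 in
/-- The discrete Hardy-space infinite element sequence
`W →(d⁰) V →(d¹) Q →(d²) X → 0` is exact. -/
theorem stmt0 (N p : ℕ) (hp : 2 ≤ p) (κ₀ : ℂ) (hκ : κ₀ ≠ 0)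
    -- the radial derivative operator ∂̂ on Π_{N+1}
    (dhat : ↥(Polynomial.degreeLE ℂ (N + 1)) →ₗ[ℂ] ↥(Polynomial.degreeLE ℂ (N + 1)))
    (hdhat : ∀ (u₀ : ℂ) (q : Polynomial ℂ), q.degree ≤ (N : ℕ) →
      ∀ w : ↥(Polynomial.degreeLE ℂ (N + 1)),
        (w : Polynomial ℂ) = Polynomial.C u₀ + (Polynomial.X - 1) * q →
        (dhat w : Polynomial ℂ)
          = (Complex.I * κ₀) • (Polynomial.C u₀ + (Polynomial.X + 1) * q))
    -- the surface gradient ∇ : P^p → (P^{p-1})²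
    (grad : ↥(MvPolynomial.restrictTotalDegree (Fin 2) ℂ p) →ₗ[ℂ]
      ↥(MvPolynomial.restrictTotalDegree (Fin 2) ℂ (p - 1)) ×
        ↥(MvPolynomial.restrictTotalDegree (Fin 2) ℂ (p - 1)))
    (hgrad : ∀ f, ((grad f).1 : MvPolynomial (Fin 2) ℂ)
          = MvPolynomial.pderiv (0 : Fin 2) (f : MvPolynomial (Fin 2) ℂ) ∧
        ((grad f).2 : MvPolynomial (Fin 2) ℂ)
          = MvPolynomial.pderiv (1 : Fin 2) (f : MvPolynomial (Fin 2) ℂ))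
    -- the rotated surface gradient ∇^⊥ : P^p → (P^{p-1})²
    (gradperp : ↥(MvPolynomial.restrictTotalDegree (Fin 2) ℂ p) →ₗ[ℂ]
      ↥(MvPolynomial.restrictTotalDegree (Fin 2) ℂ (p - 1)) ×
        ↥(MvPolynomial.restrictTotalDegree (Fin 2) ℂ (p - 1)))
    (hgradperp : ∀ f, ((gradperp f).1 : MvPolynomial (Fin 2) ℂ)
          = -(MvPolynomial.pderiv (1 : Fin 2) (f : MvPolynomial (Fin 2) ℂ)) ∧
        ((gradperp f).2 : MvPolynomial (Fin 2) ℂ)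
          = MvPolynomial.pderiv (0 : Fin 2) (f : MvPolynomial (Fin 2) ℂ))
    -- the scalar curl ∇^⊥· : (P^{p-1})² → P^{p-2}
    (scurl : (↥(MvPolynomial.restrictTotalDegree (Fin 2) ℂ (p - 1)) ×
        ↥(MvPolynomial.restrictTotalDegree (Fin 2) ℂ (p - 1))) →ₗ[ℂ]
      ↥(MvPolynomial.restrictTotalDegree (Fin 2) ℂ (p - 2)))
    (hscurl : ∀ v, (scurl v : MvPolynomial (Fin 2) ℂ)
          = MvPolynomial.pderiv (0 : Fin 2) (v.2 : MvPolynomial (Fin 2) ℂ)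
            - MvPolynomial.pderiv (1 : Fin 2) (v.1 : MvPolynomial (Fin 2) ℂ))
    -- the rotation v ↦ v^⊥ on (P^{p-1})²
    (perp : (↥(MvPolynomial.restrictTotalDegree (Fin 2) ℂ (p - 1)) ×
        ↥(MvPolynomial.restrictTotalDegree (Fin 2) ℂ (p - 1))) →ₗ[ℂ]
      ↥(MvPolynomial.restrictTotalDegree (Fin 2) ℂ (p - 1)) ×
        ↥(MvPolynomial.restrictTotalDegree (Fin 2) ℂ (p - 1)))
    (hperp : ∀ v, perp v = (-v.2, v.1))
    -- the surface divergence ∇· : (P^{p-1})² → P^{p-2}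
    (divg : (↥(MvPolynomial.restrictTotalDegree (Fin 2) ℂ (p - 1)) ×
        ↥(MvPolynomial.restrictTotalDegree (Fin 2) ℂ (p - 1))) →ₗ[ℂ]
      ↥(MvPolynomial.restrictTotalDegree (Fin 2) ℂ (p - 2)))
    (hdivg : ∀ v, (divg v : MvPolynomial (Fin 2) ℂ)
          = MvPolynomial.pderiv (0 : Fin 2) (v.1 : MvPolynomial (Fin 2) ℂ)
            + MvPolynomial.pderiv (1 : Fin 2) (v.2 : MvPolynomial (Fin 2) ℂ))
    -- d⁰ : W → V, w ↦ ((∂̂ ⊗ id) w, (id ⊗ ∇) w)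
    (d0 : (↥(Polynomial.degreeLE ℂ (N + 1)) ⊗[ℂ]
        ↥(MvPolynomial.restrictTotalDegree (Fin 2) ℂ p)) →ₗ[ℂ]
      (↥(Polynomial.degreeLE ℂ (N + 1)) ⊗[ℂ]
        ↥(MvPolynomial.restrictTotalDegree (Fin 2) ℂ p)) ×
      (↥(Polynomial.degreeLE ℂ (N + 1)) ⊗[ℂ]
        (↥(MvPolynomial.restrictTotalDegree (Fin 2) ℂ (p - 1)) ×
          ↥(MvPolynomial.restrictTotalDegree (Fin 2) ℂ (p - 1)))))
    (hd0 : ∀ w, d0 w = (TensorProduct.map dhat LinearMap.id w,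
      TensorProduct.map LinearMap.id grad w))
    -- d¹ : V → Q, (a,b) ↦ ((id ⊗ ∇^⊥·) b, −(id ⊗ ∇^⊥) a + (∂̂ ⊗ ⊥) b)
    (d1 : ((↥(Polynomial.degreeLE ℂ (N + 1)) ⊗[ℂ]
        ↥(MvPolynomial.restrictTotalDegree (Fin 2) ℂ p)) ×
      (↥(Polynomial.degreeLE ℂ (N + 1)) ⊗[ℂ]
        (↥(MvPolynomial.restrictTotalDegree (Fin 2) ℂ (p - 1)) ×
          ↥(MvPolynomial.restrictTotalDegree (Fin 2) ℂ (p - 1))))) →ₗ[ℂ]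
      ((↥(Polynomial.degreeLE ℂ (N + 1)) ⊗[ℂ]
        ↥(MvPolynomial.restrictTotalDegree (Fin 2) ℂ (p - 2))) ×
      (↥(Polynomial.degreeLE ℂ (N + 1)) ⊗[ℂ]
        (↥(MvPolynomial.restrictTotalDegree (Fin 2) ℂ (p - 1)) ×
          ↥(MvPolynomial.restrictTotalDegree (Fin 2) ℂ (p - 1))))))
    (hd1 : ∀ a b, d1 (a, b) = (TensorProduct.map LinearMap.id scurl b,
      - TensorProduct.map LinearMap.id gradperp a + TensorProduct.map dhat perp b))
    -- d² : Q → X, (c,d) ↦ (∂̂ ⊗ id) c + (id ⊗ ∇·) d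
    (d2 : ((↥(Polynomial.degreeLE ℂ (N + 1)) ⊗[ℂ]
        ↥(MvPolynomial.restrictTotalDegree (Fin 2) ℂ (p - 2))) ×
      (↥(Polynomial.degreeLE ℂ (N + 1)) ⊗[ℂ]
        (↥(MvPolynomial.restrictTotalDegree (Fin 2) ℂ (p - 1)) ×
          ↥(MvPolynomial.restrictTotalDegree (Fin 2) ℂ (p - 1))))) →ₗ[ℂ]
      ↥(Polynomial.degreeLE ℂ (N + 1)) ⊗[ℂ]
        ↥(MvPolynomial.restrictTotalDegree (Fin 2) ℂ (p - 2)))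
    (hd2 : ∀ c d, d2 (c, d) = TensorProduct.map dhat LinearMap.id c
      + TensorProduct.map LinearMap.id divg d) :
    LinearMap.range d0 = LinearMap.ker d1 ∧
    LinearMap.range d1 = LinearMap.ker d2 ∧
    Function.Surjective d2 := by
  have hIκ : Complex.I * κ₀ ≠ 0 := mul_ne_zero Complex.I_ne_zero hκ
  -- dhat is bijective
  have hbij : Function.Bijective dhat := by
    constructor
    · rw [injective_iff_map_eq_zero]
      intro w hw
      have hwdeg : (w : Polynomial ℂ).degree ≤ ((N : ℕ) + 1 : ℕ) := by
        have := Polynomial.mem_degreeLE.mp w.2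
        exact_mod_cast this
      obtain ⟨q, hqdeg, hqe⟩ := stmt0_decomp N 1 (w : Polynomial ℂ) hwdeg
      have hqe2 : (w : Polynomial ℂ)
          = Polynomial.C ((w : Polynomial ℂ).eval 1) + (Polynomial.X - 1) * q := by
        conv_lhs => rw [hqe]
        rw [Polynomial.C_1]
      have hdw := hdhat ((w : Polynomial ℂ).eval 1) q hqdeg w hqe2
      rw [hw, ZeroMemClass.coe_zero] at hdw
      have h0 : Polynomial.C ((w : Polynomial ℂ).eval 1) + (Polynomial.X + 1) * q = 0 := by
        rcases smul_eq_zero.mp hdw.symm with h | h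
        · exact absurd h hIκ
        · exact h
      have hu : (w : Polynomial ℂ).eval 1 = 0 := by
        have := congrArg (Polynomial.eval (-1)) h0
        simpa using this
      have hq0 : q = 0 := by
        rw [hu, map_zero, zero_add] at h0
        have hX1 : (Polynomial.X + 1 : Polynomial ℂ) ≠ 0 := by
          intro h
          have := congrArg (Polynomial.eval 0) h
          simpa using this
        rcases mul_eq_zero.mp h0 with h | h
        · exact absurd h hX1
        · exact h
      apply Subtype.ext
      rw [ZeroMemClass.coe_zero, hqe, hu, hq0]
      simp
    · intro t
      set s : Polynomial ℂ := (Complex.I * κ₀)⁻¹ • (t : Polynomial ℂ) with hs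
      have hsdeg : s.degree ≤ ((N : ℕ) + 1 : ℕ) := by
        refine le_trans (Polynomial.degree_smul_le _ _) ?_
        have := Polynomial.mem_degreeLE.mp t.2
        exact_mod_cast this
      obtain ⟨q, hqdeg, hqe⟩ := stmt0_decomp N (-1) s hsdeg
      set u : ℂ := s.eval (-1) with hu
      have hmem : Polynomial.C u + (Polynomial.X - 1) * q ∈ Polynomial.degreeLE ℂ (N + 1) := by
        rw [Polynomial.mem_degreeLE]
        refine le_trans (Polynomial.degree_add_le _ _) (max_le
          (le_trans Polynomial.degree_C_le (by exact_mod_cast Nat.zero_le (N + 1))) ?_)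
        have hX1 : (Polynomial.X - 1 : Polynomial ℂ) = Polynomial.X - Polynomial.C 1 := by
          rw [Polynomial.C_1]
        rw [Polynomial.degree_mul, hX1, Polynomial.degree_X_sub_C]
        calc (1 : WithBot ℕ) + q.degree ≤ 1 + (N : ℕ) := add_le_add le_rfl hqdeg
          _ ≤ (N : WithBot ℕ) + 1 := by rw [add_comm]
      refine ⟨⟨_, hmem⟩, ?_⟩
      apply Subtype.ext
      rw [hdhat u q hqdeg ⟨_, hmem⟩ rfl]
      have hse : Polynomial.C u + (Polynomial.X + 1) * q = s := by
        rw [hqe, map_neg, Polynomial.C_1, sub_neg_eq_add]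
      rw [hse, hs, smul_smul, mul_inv_cancel₀ hIκ, one_smul]
  -- a two-sided inverse for dhat
  obtain ⟨g, c6, c7⟩ : ∃ g : ↥(Polynomial.degreeLE ℂ (N + 1)) →ₗ[ℂ]
      ↥(Polynomial.degreeLE ℂ (N + 1)),
      g.comp dhat = LinearMap.id ∧ dhat.comp g = LinearMap.id := by
    refine ⟨(LinearEquiv.ofBijective dhat hbij).symm.toLinearMap, ?_, ?_⟩
    · apply LinearMap.ext; intro x
      exact (LinearEquiv.ofBijective dhat hbij).symm_apply_apply x
    · apply LinearMap.ext; intro x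
      exact (LinearEquiv.ofBijective dhat hbij).apply_symm_apply x
  -- pointwise identities for the 2D operators
  have c1 : scurl.comp grad = 0 := by
    apply LinearMap.ext; intro f
    apply Subtype.ext
    simp only [LinearMap.comp_apply, LinearMap.zero_apply, ZeroMemClass.coe_zero, hscurl,
      (hgrad f).1, (hgrad f).2]
    rw [stmt0_pderiv_comm]
    exact sub_self _
  have c2 : perp.comp grad = gradperp := by
    apply LinearMap.ext; intro f
    simp only [LinearMap.comp_apply, hperp]
    refine Prod.ext_iff.mpr ⟨Subtype.ext ?_, Subtype.ext ?_⟩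
    · simp [(hgrad f).2, (hgradperp f).1]
    · simp [(hgrad f).1, (hgradperp f).2]
  have c3 : divg.comp gradperp = 0 := by
    apply LinearMap.ext; intro f
    apply Subtype.ext
    simp only [LinearMap.comp_apply, LinearMap.zero_apply, ZeroMemClass.coe_zero, hdivg,
      (hgradperp f).1, (hgradperp f).2, map_neg]
    rw [stmt0_pderiv_comm]
    exact neg_add_cancel _
  have c4 : divg.comp perp = -scurl := by
    apply LinearMap.ext; intro v
    apply Subtype.ext
    simp only [LinearMap.comp_apply, LinearMap.neg_apply, hperp, hdivg, hscurl,
      NegMemClass.coe_neg, map_neg]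
    ring
  have c5 : perp.comp perp = -LinearMap.id := by
    apply LinearMap.ext; intro v
    rw [LinearMap.comp_apply, LinearMap.neg_apply, LinearMap.id_apply, hperp v, hperp]
    refine Prod.ext_iff.mpr ⟨?_, ?_⟩ <;> simp
  have c8 : scurl.comp perp = divg := by
    apply LinearMap.ext; intro v
    apply Subtype.ext
    simp only [LinearMap.comp_apply, hperp, hscurl, hdivg, NegMemClass.coe_neg, map_neg]
    ring
  -- injectivity of dhat ⊗ perp
  have hTinj : Function.Injective (TensorProduct.map dhat perp) := by
    have L : ∀ t, -(TensorProduct.map g perp (TensorProduct.map dhat perp t)) = t := by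
      intro t
      rw [stmt0_mapmap, c6, c5, stmt0_mapneg_apply, stmt0_mapidid]
      exact neg_neg t
    intro s t hst
    rw [← L s, ← L t, hst]
  refine ⟨?_, ?_, ?_⟩
  · -- range d0 = ker d1
    apply le_antisymm
    · rintro _ ⟨w, rfl⟩
      rw [LinearMap.mem_ker, hd0, hd1, Prod.mk_eq_zero]
      constructor
      · rw [stmt0_mapmap, c1, stmt0_mapzeroR, LinearMap.zero_apply]
      · rw [stmt0_mapmap, stmt0_mapmap, c2]
        simp only [LinearMap.id_comp, LinearMap.comp_id]
        abel
    · intro v hv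
      obtain ⟨a, b⟩ := v
      rw [LinearMap.mem_ker, hd1, Prod.mk_eq_zero] at hv
      obtain ⟨hv1, hv2⟩ := hv
      have hv2' : TensorProduct.map LinearMap.id gradperp a = TensorProduct.map dhat perp b :=
        neg_add_eq_zero.mp hv2
      refine ⟨TensorProduct.map g LinearMap.id a, ?_⟩
      rw [hd0]
      refine Prod.ext_iff.mpr ⟨?_, ?_⟩
      · rw [stmt0_mapmap, c7]
        simp only [LinearMap.id_comp, TensorProduct.map_id, LinearMap.id_apply]
      · apply hTinj
        rw [stmt0_mapmap, stmt0_mapmap]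
        simp only [LinearMap.id_comp, LinearMap.comp_id]
        rw [c7, c2]
        exact hv2'
  · -- range d1 = ker d2
    apply le_antisymm
    · rintro _ ⟨⟨a, b⟩, rfl⟩
      rw [LinearMap.mem_ker, hd1, hd2]
      have eA : TensorProduct.map LinearMap.id divg
            (- TensorProduct.map LinearMap.id gradperp a + TensorProduct.map dhat perp b)
          = TensorProduct.map LinearMap.id divg (- TensorProduct.map LinearMap.id gradperp a)
            + TensorProduct.map LinearMap.id divg (TensorProduct.map dhat perp b) :=
        map_add _ _ _
      have eB : TensorProduct.map LinearMap.id divg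
            (- TensorProduct.map LinearMap.id gradperp a)
          = - TensorProduct.map LinearMap.id divg (TensorProduct.map LinearMap.id gradperp a) :=
        map_neg (TensorProduct.map LinearMap.id divg) (TensorProduct.map LinearMap.id gradperp a)
      rw [eA, eB]
      simp only [stmt0_mapmap, LinearMap.id_comp, LinearMap.comp_id]
      rw [c3, c4, stmt0_mapzeroR, stmt0_mapneg_apply, LinearMap.zero_apply]
      abel
    · intro v hv
      obtain ⟨c, d⟩ := v
      rw [LinearMap.mem_ker, hd2] at hv
      have hdd : TensorProduct.map LinearMap.id divg d
          = -(TensorProduct.map dhat LinearMap.id c) := by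
        rw [← add_zero (-(TensorProduct.map dhat LinearMap.id c)), ← hv, ← add_assoc,
          TensorProduct.neg_add_cancel, zero_add]
      refine ⟨(0, - TensorProduct.map g perp d), ?_⟩
      rw [hd1]
      have h10 : TensorProduct.map g divg d
          = TensorProduct.map g LinearMap.id (TensorProduct.map LinearMap.id divg d) := by
        rw [stmt0_mapmap, LinearMap.comp_id, LinearMap.id_comp]
      refine Prod.ext_iff.mpr ⟨?_, ?_⟩
      · have f1 : TensorProduct.map LinearMap.id scurl (- TensorProduct.map g perp d)
            = - TensorProduct.map LinearMap.id scurl (TensorProduct.map g perp d) :=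
          map_neg (TensorProduct.map LinearMap.id scurl) (TensorProduct.map g perp d)
        rw [f1, stmt0_mapmap, LinearMap.id_comp, c8, h10, hdd]
        have f2 : TensorProduct.map g LinearMap.id (- TensorProduct.map dhat LinearMap.id c)
            = - TensorProduct.map g LinearMap.id (TensorProduct.map dhat LinearMap.id c) :=
          map_neg (TensorProduct.map g LinearMap.id) (TensorProduct.map dhat LinearMap.id c)
        rw [f2, stmt0_mapmap, c6, LinearMap.id_comp, TensorProduct.map_id, LinearMap.id_apply]
        exact neg_neg c
      · rw [map_zero]
        have f4 : TensorProduct.map dhat perp (- TensorProduct.map g perp d)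
            = - TensorProduct.map dhat perp (TensorProduct.map g perp d) :=
          map_neg (TensorProduct.map dhat perp) (TensorProduct.map g perp d)
        rw [f4, stmt0_mapmap, c7, c5, stmt0_mapneg_apply, stmt0_mapidid]
        have n1 : -(-d) = d := neg_neg d
        rw [n1]
        have n4 : (-(0 : ↥(Polynomial.degreeLE ℂ (N + 1)) ⊗[ℂ]
            (↥(MvPolynomial.restrictTotalDegree (Fin 2) ℂ (p - 1)) ×
              ↥(MvPolynomial.restrictTotalDegree (Fin 2) ℂ (p - 1))))) = 0 :=
          (add_zero _).symm.trans (TensorProduct.neg_add_cancel _)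
        rw [n4, zero_add]
  · -- d2 surjective
    intro x
    refine ⟨(TensorProduct.map g LinearMap.id x, 0), ?_⟩
    rw [hd2, map_zero, add_zero, stmt0_mapmap, c7, LinearMap.id_comp,
      TensorProduct.map_id, LinearMap.id_apply]
end

section
/- The linear map d⁰ : W → V has trivial kernel, i.e. it is injective. -/
open Polynomial in
theorem dhat_inj (N : ℕ) (κ₀ : ℂ) (hκ : κ₀ ≠ 0)
    (dhat : ↥(Polynomial.degreeLE ℂ (N + 1)) →ₗ[ℂ] ↥(Polynomial.degreeLE ℂ (N + 1)))
    (hdhat : ∀ (u₀ : ℂ) (q : Polynomial ℂ), q.degree ≤ (N : ℕ) →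
      ∀ w : ↥(Polynomial.degreeLE ℂ (N + 1)),
        (w : Polynomial ℂ) = Polynomial.C u₀ + (Polynomial.X - 1) * q →
        (dhat w : Polynomial ℂ)
          = (Complex.I * κ₀) • (Polynomial.C u₀ + (Polynomial.X + 1) * q)) :
    Function.Injective dhat := by
  rw [← LinearMap.ker_eq_bot, LinearMap.ker_eq_bot']
  intro w hw
  set P : Polynomial ℂ := (w : Polynomial ℂ) with hP
  have hdeg : P.degree ≤ ((N : ℕ) + 1 : ℕ) := by
    have := w.2
    rw [Polynomial.mem_degreeLE] at this
    exact_mod_cast this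
  set u₀ : ℂ := P.eval 1 with hu
  obtain ⟨q, hq⟩ : (X - C 1) ∣ P - C u₀ := Polynomial.X_sub_C_dvd_sub_C_eval
  have hPq : P = C u₀ + (X - 1) * q := by
    have : (X - C (1:ℂ)) = X - 1 := by simp
    rw [← this]; linear_combination (norm := ring_nf) hq
  have hqdeg : q.degree ≤ (N : ℕ) := by
    rcases eq_or_ne q 0 with h0 | h0
    · simp [h0]
    · have hm : ((X - C (1:ℂ)) * q).degree ≤ (((N + 1 : ℕ)) : WithBot ℕ) := by
        rw [← hq]
        refine le_trans (Polynomial.degree_sub_le _ _) (max_le hdeg ?_)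
        exact le_trans Polynomial.degree_C_le (by exact_mod_cast Nat.zero_le (N+1))
      rw [Polynomial.degree_mul, Polynomial.degree_X_sub_C,
        Polynomial.degree_eq_natDegree h0] at hm
      rw [Polynomial.degree_eq_natDegree h0]
      have h1 : (1 + q.natDegree : ℕ) ≤ N + 1 := by exact_mod_cast hm
      exact_mod_cast (by omega : q.natDegree ≤ N)
  have := hdhat u₀ q hqdeg w hPq
  rw [hw] at this
  have h0 : (0 : Polynomial ℂ) = (Complex.I * κ₀) • (C u₀ + (X + 1) * q) := by
    simpa using this
  have hne : Complex.I * κ₀ ≠ 0 := mul_ne_zero Complex.I_ne_zero hκ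
  have hz : C u₀ + (X + 1) * q = 0 := by
    rcases smul_eq_zero.mp h0.symm with h | h
    · exact absurd h hne
    · exact h
  have hu0 : u₀ = 0 := by
    have := congrArg (Polynomial.eval (-1 : ℂ)) hz
    simpa using this
  have hq0 : q = 0 := by
    rw [hu0] at hz
    simp only [map_zero, zero_add] at hz
    have hx : (X + 1 : Polynomial ℂ) ≠ 0 := fun hh => by
      simpa using congrArg (Polynomial.eval 0) hh
    rcases mul_eq_zero.mp hz with h | h
    · exact absurd h hx
    · exact h
  have : P = 0 := by rw [hPq, hu0, hq0]; simp
  exact Subtype.ext (by simpa [hP] using this)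


open TensorProduct

/-- The linear map `d⁰ : W → V` has trivial kernel, i.e. it is injective. -/
theorem stmt1 (N p : ℕ) (hp : 2 ≤ p) (κ₀ : ℂ) (hκ : κ₀ ≠ 0)
    -- the radial derivative operator ∂̂ on Π_{N+1}
    (dhat : ↥(Polynomial.degreeLE ℂ (N + 1)) →ₗ[ℂ] ↥(Polynomial.degreeLE ℂ (N + 1)))
    (hdhat : ∀ (u₀ : ℂ) (q : Polynomial ℂ), q.degree ≤ (N : ℕ) →
      ∀ w : ↥(Polynomial.degreeLE ℂ (N + 1)),
        (w : Polynomial ℂ) = Polynomial.C u₀ + (Polynomial.X - 1) * q →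
        (dhat w : Polynomial ℂ)
          = (Complex.I * κ₀) • (Polynomial.C u₀ + (Polynomial.X + 1) * q))
    -- the surface gradient ∇ : P^p → (P^{p-1})²
    (grad : ↥(MvPolynomial.restrictTotalDegree (Fin 2) ℂ p) →ₗ[ℂ]
      ↥(MvPolynomial.restrictTotalDegree (Fin 2) ℂ (p - 1)) ×
        ↥(MvPolynomial.restrictTotalDegree (Fin 2) ℂ (p - 1)))
    (hgrad : ∀ f, ((grad f).1 : MvPolynomial (Fin 2) ℂ)
          = MvPolynomial.pderiv (0 : Fin 2) (f : MvPolynomial (Fin 2) ℂ) ∧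
        ((grad f).2 : MvPolynomial (Fin 2) ℂ)
          = MvPolynomial.pderiv (1 : Fin 2) (f : MvPolynomial (Fin 2) ℂ))
    -- d⁰ : W → V, w ↦ ((∂̂ ⊗ id) w, (id ⊗ ∇) w)
    (d0 : (↥(Polynomial.degreeLE ℂ (N + 1)) ⊗[ℂ]
        ↥(MvPolynomial.restrictTotalDegree (Fin 2) ℂ p)) →ₗ[ℂ]
      (↥(Polynomial.degreeLE ℂ (N + 1)) ⊗[ℂ]
        ↥(MvPolynomial.restrictTotalDegree (Fin 2) ℂ p)) ×
      (↥(Polynomial.degreeLE ℂ (N + 1)) ⊗[ℂ]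
        (↥(MvPolynomial.restrictTotalDegree (Fin 2) ℂ (p - 1)) ×
          ↥(MvPolynomial.restrictTotalDegree (Fin 2) ℂ (p - 1)))))
    (hd0 : ∀ w, d0 w = (TensorProduct.map dhat LinearMap.id w,
      TensorProduct.map LinearMap.id grad w)) :
    LinearMap.ker d0 = ⊥ ∧ Function.Injective d0 := by
  have hinj : Function.Injective dhat := dhat_inj N κ₀ hκ dhat hdhat
  have hflat : Module.Flat ℂ ↥(MvPolynomial.restrictTotalDegree (Fin 2) ℂ p) :=
    Module.Flat.of_free
  have hT : Function.Injective
      (dhat.rTensor (↥(MvPolynomial.restrictTotalDegree (Fin 2) ℂ p))) :=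
    Module.Flat.rTensor_preserves_injective_linearMap dhat hinj
  have hker : LinearMap.ker d0 = ⊥ := by
    rw [LinearMap.ker_eq_bot']
    intro w hw
    rw [hd0 w] at hw
    have h1 : TensorProduct.map dhat LinearMap.id w = 0 := congrArg Prod.fst hw
    have : dhat.rTensor _ w = dhat.rTensor _ 0 := by
      simpa [LinearMap.rTensor] using h1
    exact hT this
  exact ⟨hker, fun a b h => hT (by have h1 := congrArg Prod.fst h; simpa [hd0, LinearMap.rTensor] using h1)⟩
end

section
/- Let c ∈ {1, −1}, u₀ ∈ ℂ, and let α : ℕ → ℂ be a square-summable sequence (Σ_{j≥0} |α_j|² < ∞). If for every z ∈ ℂ with |z| < 1 one has u₀ + (z + c)·Σ_{j≥0} α_j z^j = 0 (the power series converges absolutely on the open unit disk), then u₀ = 0 and α_j = 0 for all j. -/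
lemma sum_aux (γ : ℕ → ℂ) (A : ℝ) (hA : ∀ j, ‖γ j‖ ≤ A) (z : ℂ) (hz : ‖z‖ < 1) :
    Summable (fun j => γ j * z ^ j) := by
  apply Summable.of_norm_bounded (g := fun j => A * ‖z‖ ^ j)
  · exact (summable_geometric_of_lt_one (norm_nonneg z) hz).mul_left A
  · intro j
    rw [norm_mul, norm_pow]
    exact mul_le_mul_of_nonneg_right (hA j) (by positivity)

lemma coeffs_zero (β : ℕ → ℂ) (M : ℝ) (hM : ∀ j, ‖β j‖ ≤ M)
    (h : ∀ z : ℂ, ‖z‖ < 1 → ∑' j : ℕ, β j * z ^ j = 0) : ∀ j, β j = 0 := by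
  have hM0 : 0 ≤ M := le_trans (norm_nonneg _) (hM 0)
  intro n
  induction n using Nat.strong_induction_on with
  | _ n ih =>
  -- key bound: for any real 0 < t ≤ 1/2, ‖β n‖ ≤ 2 * M * t
  have key : ∀ t : ℝ, 0 < t → t ≤ 1/2 → ‖β n‖ ≤ 2 * M * t := by
    intro t ht ht2
    set z : ℂ := (t : ℂ) with hzdef
    have hznorm : ‖z‖ = t := by
      simp [hzdef, Complex.norm_real, abs_of_pos ht]
    have hz1 : ‖z‖ < 1 := by rw [hznorm]; linarith
    have hzne : z ≠ 0 := by
      simp [hzdef]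
      exact_mod_cast ht.ne'
    -- summability of the shifted series
    have hs : ∀ k : ℕ, Summable (fun j => β (j + k) * z ^ j) :=
      fun k => sum_aux (fun j => β (j + k)) M (fun j => hM _) z hz1
    have hs0 : Summable (fun j => β j * z ^ j) := by
      simpa using hs 0
    -- split off the first n terms, all zero by ih
    have hsplit := Summable.sum_add_tsum_nat_add n hs0
    have hfin : (∑ i ∈ Finset.range n, β i * z ^ i) = 0 := by
      apply Finset.sum_eq_zero
      intro i hi
      rw [ih i (Finset.mem_range.mp hi), zero_mul]
    rw [h z hz1, hfin, zero_add] at hsplit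
    -- factor out z^n
    have hfac : (∑' j : ℕ, β (j + n) * z ^ (j + n))
        = (∑' j : ℕ, β (j + n) * z ^ j) * z ^ n := by
      rw [← tsum_mul_right]
      congr 1
      funext j
      rw [pow_add]
      ring
    rw [hfac] at hsplit
    have hg : (∑' j : ℕ, β (j + n) * z ^ j) = 0 :=
      (mul_eq_zero.mp hsplit).resolve_right (pow_ne_zero n hzne)
    -- peel off the first term
    have hzero_add := Summable.tsum_eq_zero_add (hs n)
    rw [hg] at hzero_add
    simp only [pow_zero, mul_one, zero_add] at hzero_add
    have hβn : β n = -∑' j : ℕ, β (j + 1 + n) * z ^ (j + 1) := by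
      have := hzero_add
      linear_combination -this
    rw [hβn, norm_neg]
    -- bound the tail
    have hb : ∀ j : ℕ, ‖β (j + 1 + n) * z ^ (j + 1)‖ ≤ M * t * t ^ j := by
      intro j
      rw [norm_mul, norm_pow, hznorm, pow_succ]
      calc ‖β (j + 1 + n)‖ * (t ^ j * t) ≤ M * (t ^ j * t) :=
            mul_le_mul_of_nonneg_right (hM _) (by positivity)
        _ = M * t * t ^ j := by ring
    have hgeo : Summable (fun j : ℕ => M * t * t ^ j) :=
      (summable_geometric_of_lt_one ht.le (by linarith)).mul_left (M * t)
    have hns : Summable (fun j : ℕ => ‖β (j + 1 + n) * z ^ (j + 1)‖) :=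
      Summable.of_nonneg_of_le (fun _ => norm_nonneg _) hb hgeo
    calc ‖∑' j : ℕ, β (j + 1 + n) * z ^ (j + 1)‖
          ≤ ∑' j : ℕ, M * t * t ^ j :=
            (norm_tsum_le_tsum_norm hns).trans (Summable.tsum_le_tsum hb hns hgeo)
        _ = M * t * (1 - t)⁻¹ := by
            rw [tsum_mul_left, tsum_geometric_of_lt_one ht.le (by linarith)]
        _ ≤ 2 * M * t := by
            have h1 : (1 - t)⁻¹ ≤ 2 := by
              rw [inv_le_comm₀ (by linarith) (by norm_num)]
              linarith
            calc M * t * (1 - t)⁻¹ ≤ M * t * 2 :=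
                  mul_le_mul_of_nonneg_left h1 (by positivity)
              _ = 2 * M * t := by ring
  -- conclude ‖β n‖ = 0
  have hle : ‖β n‖ ≤ 0 := by
    apply le_of_forall_pos_le_add
    intro ε hε
    rcases le_or_gt ε (M + 1) with hεM | hεM
    · have ht : (0:ℝ) < ε / (4 * (M + 1)) := by positivity
      have ht2 : ε / (4 * (M + 1)) ≤ 1/2 := by
        rw [div_le_iff₀ (by positivity)]
        nlinarith
      have := key _ ht ht2
      have : ‖β n‖ ≤ 2 * M * (ε / (4 * (M + 1))) := this
      calc ‖β n‖ ≤ 2 * M * (ε / (4 * (M + 1))) := this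
        _ ≤ ε := by
            rw [div_eq_mul_inv]
            rw [mul_comm ε]
            rw [← mul_assoc]
            have : 2 * M * (4 * (M + 1))⁻¹ ≤ 1 := by
              rw [mul_inv_le_iff₀ (by positivity)]
              nlinarith
            nlinarith [mul_le_mul_of_nonneg_right this hε.le]
        _ ≤ 0 + ε := by linarith
    · have := key (1/4) (by norm_num) (by norm_num)
      calc ‖β n‖ ≤ 2 * M * (1/4) := this
        _ ≤ 0 + ε := by linarith
  rw [← norm_eq_zero]
  exact le_antisymm hle (norm_nonneg _)

/-- Injectivity of the operators `T_±` on the Hardy space `H⁺(S¹)`: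
if `u₀ + (z + c)·Σ_j α_j z^j = 0` on the open unit disk with `α` square-summable,
then `u₀ = 0` and `α ≡ 0`. -/
theorem stmt4 (c : ℂ) (hc : c = 1 ∨ c = -1) (u₀ : ℂ) (α : ℕ → ℂ)
    (hα : Summable fun j => ‖α j‖ ^ 2)
    (h : ∀ z : ℂ, ‖z‖ < 1 → u₀ + (z + c) * ∑' j : ℕ, α j * z ^ j = 0) :
    u₀ = 0 ∧ ∀ j, α j = 0 := by
  have hc1 : ‖c‖ = 1 := by rcases hc with rfl | rfl <;> simp
  have hcc : c * c = 1 := by rcases hc with rfl | rfl <;> ring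
  -- bound on α
  obtain ⟨A, hA⟩ : ∃ A : ℝ, ∀ j, ‖α j‖ ≤ A := by
    have h0 : Filter.Tendsto (fun j => ‖α j‖ ^ 2) Filter.atTop (nhds 0) :=
      hα.tendsto_atTop_zero
    obtain ⟨B, hB⟩ := h0.bddAbove_range
    refine ⟨Real.sqrt B, fun j => ?_⟩
    have := hB (Set.mem_range_self j)
    calc ‖α j‖ = Real.sqrt (‖α j‖ ^ 2) := by
          rw [Real.sqrt_sq (norm_nonneg _)]
      _ ≤ Real.sqrt B := Real.sqrt_le_sqrt this
  have hA0 : 0 ≤ A := le_trans (norm_nonneg _) (hA 0)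
  -- the combined coefficient sequence
  set β : ℕ → ℂ := fun n => Nat.casesOn n (u₀ + c * α 0) (fun j => α j + c * α (j + 1))
    with hβdef
  have hMβ : ∀ j, ‖β j‖ ≤ ‖u₀‖ + A + A := by
    intro j
    cases j with
    | zero =>
        calc ‖u₀ + c * α 0‖ ≤ ‖u₀‖ + ‖c * α 0‖ := norm_add_le _ _
          _ = ‖u₀‖ + ‖α 0‖ := by rw [norm_mul, hc1, one_mul]
          _ ≤ ‖u₀‖ + A + A := by have := hA 0; linarith
    | succ j =>
        calc ‖α j + c * α (j + 1)‖ ≤ ‖α j‖ + ‖c * α (j + 1)‖ := norm_add_le _ _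
          _ = ‖α j‖ + ‖α (j + 1)‖ := by rw [norm_mul, hc1, one_mul]
          _ ≤ ‖u₀‖ + A + A := by
              have := hA j; have := hA (j + 1); have := norm_nonneg u₀; linarith
  -- the β-series agrees with u₀ + (z+c)·f(z)
  have hβsum : ∀ z : ℂ, ‖z‖ < 1 → ∑' j : ℕ, β j * z ^ j = 0 := by
    intro z hz
    have hsα : Summable (fun j => α j * z ^ j) := sum_aux α A hA z hz
    have hsα' : Summable (fun j => α (j + 1) * z ^ (j + 1)) := by
      have := hsα.comp_injective (add_left_injective 1)
      simpa [Function.comp_def] using this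
    have hsβ : Summable (fun j => β j * z ^ j) :=
      sum_aux β (‖u₀‖ + A + A) hMβ z hz
    have key : ∑' j : ℕ, β j * z ^ j = u₀ + (z + c) * ∑' j : ℕ, α j * z ^ j := by
      rw [Summable.tsum_eq_zero_add hsβ]
      have h1 : (fun j : ℕ => β (j + 1) * z ^ (j + 1))
          = fun j : ℕ => α j * z ^ (j + 1) + c * (α (j + 1) * z ^ (j + 1)) := by
        funext j
        show (α j + c * α (j + 1)) * z ^ (j + 1) = _
        ring
      rw [h1, Summable.tsum_add (by
          have := hsα.mul_right z
          simpa [pow_succ, mul_assoc] using this)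
        (hsα'.mul_left c)]
      have h2 : ∑' j : ℕ, α j * z ^ (j + 1) = z * ∑' j : ℕ, α j * z ^ j := by
        rw [← tsum_mul_left]
        congr 1
        funext j
        rw [pow_succ]
        ring
      have h3 : ∑' j : ℕ, c * (α (j + 1) * z ^ (j + 1))
          = c * ∑' j : ℕ, α (j + 1) * z ^ (j + 1) := tsum_mul_left
      have h4 : (α 0 : ℂ) + ∑' j : ℕ, α (j + 1) * z ^ (j + 1) = ∑' j : ℕ, α j * z ^ j := by
        rw [Summable.tsum_eq_zero_add hsα]
        simp
      have hb : β 0 * z ^ 0 = u₀ + c * α 0 := by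
        show (u₀ + c * α 0) * z ^ 0 = _
        ring
      rw [hb, h2, h3]
      linear_combination c * h4
    rw [key]
    exact h z hz
  have hβ0 : ∀ j, β j = 0 := coeffs_zero β (‖u₀‖ + A + A) hMβ hβsum
  have hb0 : u₀ + c * α 0 = 0 := hβ0 0
  have hbs : ∀ j, α j + c * α (j + 1) = 0 := fun j => hβ0 (j + 1)
  -- recursion: α (j+1) = -(c * α j)
  have hrec : ∀ j, α (j + 1) = -(c * α j) := by
    intro j
    have h1 := hbs j
    have : c * (α j + c * α (j + 1)) = 0 := by rw [h1, mul_zero]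
    have h2 : c * α j + (c * c) * α (j + 1) = 0 := by linear_combination this
    rw [hcc, one_mul] at h2
    linear_combination h2
  -- constant norms
  have hnorm : ∀ j, ‖α j‖ = ‖α 0‖ := by
    intro j
    induction j with
    | zero => rfl
    | succ j ih => rw [hrec j, norm_neg, norm_mul, hc1, one_mul, ih]
  -- summable constant ⇒ zero
  have hα0 : α 0 = 0 := by
    have hconst : Summable (fun _ : ℕ => ‖α 0‖ ^ 2) := by
      have : (fun j => ‖α j‖ ^ 2) = fun _ : ℕ => ‖α 0‖ ^ 2 := by
        funext j; rw [hnorm j]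
      rwa [this] at hα
    have ht := hconst.tendsto_atTop_zero
    have := tendsto_nhds_unique ht tendsto_const_nhds
    have hn : ‖α 0‖ = 0 := by
      have := this
      nlinarith [norm_nonneg (α 0), sq_nonneg (‖α 0‖)]
    exact norm_eq_zero.mp hn
  have hall : ∀ j, α j = 0 := by
    intro j
    induction j with
    | zero => exact hα0
    | succ j ih => rw [hrec j, ih, mul_zero, neg_zero]
  refine ⟨?_, hall⟩
  have := hb0
  rw [hα0, mul_zero, add_zero] at this
  exact this
end

section
/- Let U and Ω be open subsets of ℝ³ and F : U → Ω a C² diffeomorphism with everywhere invertible Jacobian matrix J(x). Let û : U → ℝ³ be continuously differentiable and define u : Ω → ℝ³ by u(F(x)) = J(x)^{−T} û(x) for x ∈ U. Then for every x ∈ U one has (∇×u)(F(x)) = (1/det J(x)) · J(x) · (∇×û)(x). -/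
/-- The partial derivative `∂ᵢw(x)` of a scalar function on `ℝ³`. -/
noncomputable def pd3 (w : (Fin 3 → ℝ) → ℝ) (i : Fin 3) (x : Fin 3 → ℝ) : ℝ :=
  fderiv ℝ w x (Pi.single i 1)

/-- The curl `∇×w = (∂₂w₃ − ∂₃w₂, ∂₃w₁ − ∂₁w₃, ∂₁w₂ − ∂₂w₁)` of a vector field on `ℝ³`. -/
noncomputable def curl3 (w : (Fin 3 → ℝ) → (Fin 3 → ℝ)) (x : Fin 3 → ℝ) : Fin 3 → ℝ :=
  ![pd3 (fun y => w y 2) 1 x - pd3 (fun y => w y 1) 2 x,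
    pd3 (fun y => w y 0) 2 x - pd3 (fun y => w y 2) 0 x,
    pd3 (fun y => w y 1) 0 x - pd3 (fun y => w y 0) 1 x]

lemma clm_apply_pi3 (φ : (Fin 3 → ℝ) →L[ℝ] ℝ) (v : Fin 3 → ℝ) :
    φ v = ∑ l : Fin 3, v l * φ (Pi.single l 1) := by
  have hv : v = ∑ l : Fin 3, v l • (Pi.single l 1 : Fin 3 → ℝ) := by
    funext m
    simp [Finset.sum_apply, Pi.single_apply]
  conv_lhs => rw [hv]
  rw [map_sum]
  simp [smul_eq_mul]

lemma pd3_congr {f g : (Fin 3 → ℝ) → ℝ} {x : Fin 3 → ℝ} (h : f =ᶠ[nhds x] g) (i : Fin 3) :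
    pd3 f i x = pd3 g i x := by
  rw [pd3, pd3, h.fderiv_eq]

lemma pd3_add {f g : (Fin 3 → ℝ) → ℝ} {x : Fin 3 → ℝ} (hf : DifferentiableAt ℝ f x)
    (hg : DifferentiableAt ℝ g x) (i : Fin 3) :
    pd3 (fun y => f y + g y) i x = pd3 f i x + pd3 g i x := by
  rw [pd3, pd3, pd3, fderiv_fun_add hf hg]; simp

lemma pd3_mul {f g : (Fin 3 → ℝ) → ℝ} {x : Fin 3 → ℝ} (hf : DifferentiableAt ℝ f x)
    (hg : DifferentiableAt ℝ g x) (i : Fin 3) :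
    pd3 (fun y => f y * g y) i x = f x * pd3 g i x + g x * pd3 f i x := by
  rw [pd3, pd3, pd3, fderiv_fun_mul hf hg]; simp


set_option maxHeartbeats 1000000 in
lemma key_alg3 (J : Matrix (Fin 3) (Fin 3) ℝ) (hdet : J.det ≠ 0)
    (D : Fin 3 → Fin 3 → ℝ) (s : Fin 3 → Fin 3 → ℝ) (hs : ∀ i j, s i j = s j i)
    (P : Fin 3 → Fin 3 → ℝ)
    (hP : ∀ i j, P i j = s i j + ∑ k : Fin 3, J k j * ∑ l : Fin 3, J l i * D l k) :
    ![D 1 2 - D 2 1, D 2 0 - D 0 2, D 0 1 - D 1 0] =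
      (1 / J.det) • J.mulVec ![P 1 2 - P 2 1, P 2 0 - P 0 2, P 0 1 - P 1 0] := by
  funext p
  fin_cases p <;>
  [ (show (![D 1 2 - D 2 1, D 2 0 - D 0 2, D 0 1 - D 1 0] : Fin 3 → ℝ) 0 = ((1 / J.det) • J.mulVec ![P 1 2 - P 2 1, P 2 0 - P 0 2, P 0 1 - P 1 0]) 0);
    (show (![D 1 2 - D 2 1, D 2 0 - D 0 2, D 0 1 - D 1 0] : Fin 3 → ℝ) 1 = ((1 / J.det) • J.mulVec ![P 1 2 - P 2 1, P 2 0 - P 0 2, P 0 1 - P 1 0]) 1);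
    (show (![D 1 2 - D 2 1, D 2 0 - D 0 2, D 0 1 - D 1 0] : Fin 3 → ℝ) 2 = ((1 / J.det) • J.mulVec ![P 1 2 - P 2 1, P 2 0 - P 0 2, P 0 1 - P 1 0]) 2)] <;>
  · simp only [Matrix.cons_val_zero, Matrix.cons_val_one, Matrix.head_cons,
      Matrix.cons_val_two, Matrix.tail_cons, Pi.smul_apply, smul_eq_mul,
      Matrix.mulVec, dotProduct, Fin.sum_univ_three, Fin.isValue]
    rw [hP 1 2, hP 2 1, hP 2 0, hP 0 2, hP 0 1, hP 1 0, hs 2 1, hs 0 2, hs 1 0,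
      one_div, inv_mul_eq_div, eq_div_iff hdet]
    simp only [Fin.sum_univ_three]
    rw [Matrix.det_fin_three]
    ring

set_option maxHeartbeats 1000000 in
/-- Transformation of the curl under a C² diffeomorphism `F`:
if `u(F(x)) = J(x)⁻ᵀ û(x)` then `(∇×u)(F(x)) = (1/det J(x)) J(x) (∇×û)(x)`. -/
theorem stmt6 (U Ω : Set (Fin 3 → ℝ)) (hU : IsOpen U) (hΩ : IsOpen Ω)
    (F Finv : (Fin 3 → ℝ) → (Fin 3 → ℝ))
    (hF : ContDiffOn ℝ 2 F U) (hFinv : ContDiffOn ℝ 2 Finv Ω)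
    (hFmaps : Set.MapsTo F U Ω) (hFinvmaps : Set.MapsTo Finv Ω U)
    (hleft : ∀ x ∈ U, Finv (F x) = x) (hright : ∀ y ∈ Ω, F (Finv y) = y)
    (J : (Fin 3 → ℝ) → Matrix (Fin 3) (Fin 3) ℝ)
    (hJ : ∀ x ∈ U, ∀ i j, J x i j = fderiv ℝ F x (Pi.single j 1) i)
    (hJunit : ∀ x ∈ U, IsUnit (J x))
    (uhat : (Fin 3 → ℝ) → (Fin 3 → ℝ)) (huhat : ContDiffOn ℝ 1 uhat U)
    (u : (Fin 3 → ℝ) → (Fin 3 → ℝ))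
    (hu : ∀ x ∈ U, u (F x) = ((J x)⁻¹).transpose.mulVec (uhat x)) :
    ∀ x ∈ U, curl3 u (F x) = (1 / (J x).det) • (J x).mulVec (curl3 uhat x) := by
  intro x₀ hx₀
  have hUn : U ∈ nhds x₀ := hU.mem_nhds hx₀
  have hy₀Ω : F x₀ ∈ Ω := hFmaps hx₀
  have hΩn : Ω ∈ nhds (F x₀) := hΩ.mem_nhds hy₀Ω
  have hFinvx : Finv (F x₀) = x₀ := hleft x₀ hx₀
  have hdetu : ∀ x ∈ U, IsUnit (J x).det := fun x hx =>
    (Matrix.isUnit_iff_isUnit_det _).mp (hJunit x hx)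
  have hdet : (J x₀).det ≠ 0 := (hdetu x₀ hx₀).ne_zero
  -- differentiability of F, Finv, fderiv F
  have hFdiff : DifferentiableAt ℝ F x₀ := (hF.contDiffAt hUn).differentiableAt (by norm_num)
  have hFinvdiff : DifferentiableAt ℝ Finv (F x₀) :=
    (hFinv.contDiffAt hΩn).differentiableAt (by norm_num)
  have hdF : ContDiffOn ℝ 1 (fderiv ℝ F) U := hF.fderiv_of_isOpen hU (by norm_num)
  have hdFdiff : ∀ x ∈ U, DifferentiableAt ℝ (fderiv ℝ F) x := fun x hx =>
    (hdF.contDiffAt (hU.mem_nhds hx)).differentiableAt (by norm_num)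
  -- entries of the Jacobian as differentiable functions
  have hent : ∀ x ∈ U, ∀ k j : Fin 3,
      DifferentiableAt ℝ (fun x => fderiv ℝ F x (Pi.single j 1) k) x := by
    intro x hx k j
    have h := (((ContinuousLinearMap.proj (R := ℝ) (φ := fun _ : Fin 3 => ℝ) k).comp
      (ContinuousLinearMap.apply ℝ (Fin 3 → ℝ) (Pi.single j 1))).differentiableAt).comp
      x (hdFdiff x hx)
    exact h
  -- second derivative entries
  have hfderiv_ent : ∀ k j i : Fin 3,
      fderiv ℝ (fun x => fderiv ℝ F x (Pi.single j 1) k) x₀ (Pi.single i 1)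
        = fderiv ℝ (fderiv ℝ F) x₀ (Pi.single i 1) (Pi.single j 1) k := by
    intro k j i
    have h : (fun x => fderiv ℝ F x (Pi.single j 1) k)
        = (((ContinuousLinearMap.proj (R := ℝ) (φ := fun _ : Fin 3 => ℝ) k).comp
          (ContinuousLinearMap.apply ℝ (Fin 3 → ℝ) (Pi.single j 1))) ∘ (fderiv ℝ F)) := rfl
    rw [h, fderiv_comp x₀ (ContinuousLinearMap.differentiableAt _) (hdFdiff x₀ hx₀),
      ContinuousLinearMap.fderiv]
    simp
  have hsymm : ∀ v w, fderiv ℝ (fderiv ℝ F) x₀ v w = fderiv ℝ (fderiv ℝ F) x₀ w v :=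
    (hF.contDiffAt hUn).isSymmSndFDerivAt (by norm_num)
  -- the Jacobian matrix as a function along `Finv`
  set M : (Fin 3 → ℝ) → Matrix (Fin 3) (Fin 3) ℝ :=
    fun y => Matrix.of fun a b => fderiv ℝ F (Finv y) (Pi.single b 1) a with hMdef
  have hMd : ∀ a b : Fin 3, DifferentiableAt ℝ (fun y => M y a b) (F x₀) := by
    intro a b
    have h1 : DifferentiableAt ℝ (fun x => fderiv ℝ F x (Pi.single b 1) a) (Finv (F x₀)) := by
      rw [hFinvx]; exact hent x₀ hx₀ a b
    exact h1.comp (F x₀) hFinvdiff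
  have hMJ : ∀ y ∈ Ω, M y = J (Finv y) := by
    intro y hy
    ext a b
    rw [hJ (Finv y) (hFinvmaps hy) a b]; rfl
  have hMx : M (F x₀) = J x₀ := by rw [hMJ (F x₀) hy₀Ω, hFinvx]
  have hdetd : DifferentiableAt ℝ (fun y => (M y).det) (F x₀) := by
    simp only [Matrix.det_fin_three]
    exact (((((((hMd 0 0).mul (hMd 1 1)).mul (hMd 2 2)).sub
      (((hMd 0 0).mul (hMd 1 2)).mul (hMd 2 1))).sub
      (((hMd 0 1).mul (hMd 1 0)).mul (hMd 2 2))).add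
      (((hMd 0 1).mul (hMd 1 2)).mul (hMd 2 0))).add
      (((hMd 0 2).mul (hMd 1 0)).mul (hMd 2 1))).sub
      (((hMd 0 2).mul (hMd 1 1)).mul (hMd 2 0))
  have hdetne : (M (F x₀)).det ≠ 0 := by rw [hMx]; exact hdet
  have hadjd : ∀ a b : Fin 3, DifferentiableAt ℝ (fun y => (M y).adjugate a b) (F x₀) := by
    intro a b
    fin_cases a <;> fin_cases b <;>
      simp only [Matrix.adjugate_fin_three, Matrix.cons_val', Matrix.cons_val_zero,
        Matrix.cons_val_one, Matrix.head_cons, Matrix.empty_val', Matrix.cons_val_fin_one,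
        Matrix.head_fin_const] <;>
      first
        | exact ((hMd _ _).mul (hMd _ _)).sub ((hMd _ _).mul (hMd _ _))
        | exact (((hMd _ _).mul (hMd _ _)).neg).add ((hMd _ _).mul (hMd _ _))
  have huhatc : ∀ b : Fin 3, DifferentiableAt ℝ (fun y => uhat (Finv y) b) (F x₀) := by
    intro b
    have h0 : DifferentiableAt ℝ uhat (Finv (F x₀)) := by
      rw [hFinvx]; exact (huhat.contDiffAt hUn).differentiableAt (by norm_num)
    have h1 : DifferentiableAt ℝ (fun y => uhat (Finv y)) (F x₀) := by
      simpa [Function.comp] using h0.comp (F x₀) hFinvdiff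
    exact differentiableAt_pi.mp h1 b
  -- the formula for u on Ω
  have hform : ∀ y ∈ Ω, ∀ k : Fin 3,
      u y k = ((M y).det)⁻¹ * ∑ b : Fin 3, (M y).adjugate b k * uhat (Finv y) b := by
    intro y hy k
    have hx : Finv y ∈ U := hFinvmaps hy
    have h1 : u y = ((J (Finv y))⁻¹).transpose.mulVec (uhat (Finv y)) := by
      have := hu (Finv y) hx
      rwa [hright y hy] at this
    rw [h1, ← hMJ y hy]
    rw [Matrix.inv_def, Ring.inverse_eq_inv']
    simp only [Matrix.mulVec, dotProduct, Matrix.transpose_apply, Matrix.smul_apply,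
      smul_eq_mul, Finset.mul_sum]
    exact Finset.sum_congr rfl fun b _ => by ring
  -- differentiability of `u` at `F x₀`
  have hudiff : ∀ k : Fin 3, DifferentiableAt ℝ (fun y => u y k) (F x₀) := by
    intro k
    have heq : (fun y => u y k) =ᶠ[nhds (F x₀)]
        (fun y => ((M y).det)⁻¹ * ∑ b : Fin 3, (M y).adjugate b k * uhat (Finv y) b) :=
      Filter.eventuallyEq_of_mem hΩn fun y hy => hform y hy k
    refine (DifferentiableAt.congr_of_eventuallyEq ?_ heq)
    refine (hdetd.inv hdetne).mul ?_
    simp only [Fin.sum_univ_three]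
    exact (((hadjd 0 k).mul (huhatc 0)).add ((hadjd 1 k).mul (huhatc 1))).add
      ((hadjd 2 k).mul (huhatc 2))
  -- uhat in terms of u ∘ F
  have hform2 : ∀ x ∈ U, ∀ jj : Fin 3,
      uhat x jj = ∑ k : Fin 3, fderiv ℝ F x (Pi.single jj 1) k * u (F x) k := by
    intro x hx jj
    have h1 : (J x).transpose.mulVec (u (F x)) = uhat x := by
      rw [hu x hx, Matrix.mulVec_mulVec, ← Matrix.transpose_mul,
        Matrix.nonsing_inv_mul (J x) (hdetu x hx), Matrix.transpose_one, Matrix.one_mulVec]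
    rw [← h1]
    simp only [Matrix.mulVec, dotProduct, Matrix.transpose_apply]
    exact Finset.sum_congr rfl fun k _ => by rw [hJ x hx k jj]
  have hcompd : ∀ k : Fin 3, DifferentiableAt ℝ (fun x => u (F x) k) x₀ := fun k => by
    exact (hudiff k).comp x₀ hFdiff
  have hcomp_pd : ∀ k i : Fin 3, pd3 (fun x => u (F x) k) i x₀
      = ∑ l : Fin 3, J x₀ l i * pd3 (fun y => u y k) l (F x₀) := by
    intro k i
    have h : (fun x => u (F x) k) = ((fun y => u y k) ∘ F) := rfl
    rw [pd3, h, fderiv_comp x₀ (hudiff k) hFdiff, ContinuousLinearMap.comp_apply,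
      clm_apply_pi3]
    exact Finset.sum_congr rfl fun l _ => by rw [hJ x₀ hx₀ l i]; rfl
  -- the main chain-rule computation
  have hmain : ∀ i j : Fin 3,
      pd3 (fun x => uhat x j) i x₀
        = (∑ k : Fin 3, fderiv ℝ (fderiv ℝ F) x₀ (Pi.single i 1) (Pi.single j 1) k * u (F x₀) k)
          + ∑ k : Fin 3, J x₀ k j *
              ∑ l : Fin 3, J x₀ l i * pd3 (fun y => u y k) l (F x₀) := by
    intro i j
    have heq : (fun x => uhat x j) =ᶠ[nhds x₀]
        (fun x => (fderiv ℝ F x (Pi.single j 1) 0 * u (F x) 0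
          + fderiv ℝ F x (Pi.single j 1) 1 * u (F x) 1)
          + fderiv ℝ F x (Pi.single j 1) 2 * u (F x) 2) := by
      refine Filter.eventuallyEq_of_mem hUn fun x hx => ?_
      rw [hform2 x hx j, Fin.sum_univ_three]
    rw [pd3_congr heq i,
      pd3_add (((hent x₀ hx₀ 0 j).fun_mul (hcompd 0)).fun_add ((hent x₀ hx₀ 1 j).fun_mul (hcompd 1)))
        ((hent x₀ hx₀ 2 j).fun_mul (hcompd 2)) i,
      pd3_add ((hent x₀ hx₀ 0 j).fun_mul (hcompd 0)) ((hent x₀ hx₀ 1 j).fun_mul (hcompd 1)) i,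
      pd3_mul (hent x₀ hx₀ 0 j) (hcompd 0) i, pd3_mul (hent x₀ hx₀ 1 j) (hcompd 1) i,
      pd3_mul (hent x₀ hx₀ 2 j) (hcompd 2) i,
      hcomp_pd 0 i, hcomp_pd 1 i, hcomp_pd 2 i]
    have s0 : pd3 (fun x => fderiv ℝ F x (Pi.single j 1) 0) i x₀
        = fderiv ℝ (fderiv ℝ F) x₀ (Pi.single i 1) (Pi.single j 1) 0 := hfderiv_ent 0 j i
    have s1 : pd3 (fun x => fderiv ℝ F x (Pi.single j 1) 1) i x₀
        = fderiv ℝ (fderiv ℝ F) x₀ (Pi.single i 1) (Pi.single j 1) 1 := hfderiv_ent 1 j i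
    have s2 : pd3 (fun x => fderiv ℝ F x (Pi.single j 1) 2) i x₀
        = fderiv ℝ (fderiv ℝ F) x₀ (Pi.single i 1) (Pi.single j 1) 2 := hfderiv_ent 2 j i
    rw [s0, s1, s2]
    simp only [Fin.sum_univ_three, hJ x₀ hx₀]
    ring
  -- final assembly
  exact key_alg3 (J x₀) hdet
    (fun l k => pd3 (fun y => u y k) l (F x₀))
    (fun i j => ∑ k : Fin 3, fderiv ℝ (fderiv ℝ F) x₀ (Pi.single i 1) (Pi.single j 1) k
      * u (F x₀) k)
    (fun i j => Finset.sum_congr rfl fun k _ => by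
      rw [hsymm (Pi.single i 1) (Pi.single j 1)])
    (fun i j => pd3 (fun x => uhat x j) i x₀) hmain
end

section
/- Let U and Ω be open subsets of ℝ³ and F : U → Ω a C² diffeomorphism with everywhere invertible Jacobian matrix J(x). Let û : U → ℝ³ be continuously differentiable and define u : Ω → ℝ³ by u(F(x)) = (1/det J(x)) · J(x) · û(x) for x ∈ U. Then for every x ∈ U one has (∇·u)(F(x)) = (1/det J(x)) · (∇·û)(x). -/
lemma clm_eval3 {G : Type*} [NormedAddCommGroup G] [NormedSpace ℝ G]
    (L : (Fin 3 → ℝ) →L[ℝ] G) (w : Fin 3 → ℝ) :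
    L w = ∑ j, w j • L (Pi.single j 1) := by
  have hw : w = ∑ j, (w j) • (Pi.single j (1:ℝ) : Fin 3 → ℝ) := by
    funext k
    simp [Finset.sum_apply, Pi.single_apply]
  conv_lhs => rw [hw, map_sum]
  simp



/-- The divergence `∇·w = ∂₁w₁ + ∂₂w₂ + ∂₃w₃` of a vector field on `ℝ³`. -/
noncomputable def div3 (w : (Fin 3 → ℝ) → (Fin 3 → ℝ)) (x : Fin 3 → ℝ) : ℝ :=
  ∑ i : Fin 3, pd3 (fun y => w y i) i x

set_option maxHeartbeats 8000000 in
set_option maxRecDepth 100000 in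
/-- Transformation of the divergence under a C² diffeomorphism `F`:
if `u(F(x)) = (1/det J(x)) J(x) û(x)` then `(∇·u)(F(x)) = (1/det J(x)) (∇·û)(x)`. -/
theorem stmt7 (U Ω : Set (Fin 3 → ℝ)) (hU : IsOpen U) (hΩ : IsOpen Ω)
    (F Finv : (Fin 3 → ℝ) → (Fin 3 → ℝ))
    (hF : ContDiffOn ℝ 2 F U) (hFinv : ContDiffOn ℝ 2 Finv Ω)
    (hFmaps : Set.MapsTo F U Ω) (hFinvmaps : Set.MapsTo Finv Ω U)
    (hleft : ∀ x ∈ U, Finv (F x) = x) (hright : ∀ y ∈ Ω, F (Finv y) = y)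
    (J : (Fin 3 → ℝ) → Matrix (Fin 3) (Fin 3) ℝ)
    (hJ : ∀ x ∈ U, ∀ i j, J x i j = fderiv ℝ F x (Pi.single j 1) i)
    (hJunit : ∀ x ∈ U, IsUnit (J x))
    (uhat : (Fin 3 → ℝ) → (Fin 3 → ℝ)) (huhat : ContDiffOn ℝ 1 uhat U)
    (u : (Fin 3 → ℝ) → (Fin 3 → ℝ))
    (hu : ∀ x ∈ U, u (F x) = (1 / (J x).det) • (J x).mulVec (uhat x)) :
    ∀ x ∈ U, div3 u (F x) = (1 / (J x).det) * div3 uhat x := by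
  intro x₀ hx₀
  have hUx : U ∈ nhds x₀ := hU.mem_nhds hx₀
  have hy₀ : F x₀ ∈ Ω := hFmaps hx₀
  have hΩy : Ω ∈ nhds (F x₀) := hΩ.mem_nhds hy₀
  -- differentiability of F, second derivative and symmetry
  have hFdiff : ∀ x ∈ U, DifferentiableAt ℝ F x := fun x hx =>
    (hF.contDiffAt (hU.mem_nhds hx)).differentiableAt two_ne_zero
  have hf'C : ContDiffAt ℝ 1 (fderiv ℝ F) x₀ :=
    (hF.contDiffAt hUx).fderiv_right (by norm_num)
  have hf'diff : DifferentiableAt ℝ (fderiv ℝ F) x₀ := hf'C.differentiableAt one_ne_zero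
  set f'' := fderiv ℝ (fderiv ℝ F) x₀ with hf''def
  have hf'' : HasFDerivAt (fderiv ℝ F) f'' x₀ := hf'diff.hasFDerivAt
  have hsymm : ∀ v w, f'' v w = f'' w v := by
    intro v w
    refine second_derivative_symmetric_of_eventually (f := F) ?_ hf'' v w
    filter_upwards [hUx] with x hx using (hFdiff x hx).hasFDerivAt
  -- derivatives of the entries of J
  have hJcongr : ∀ i j : Fin 3,
      (fun x => J x i j) =ᶠ[nhds x₀] (fun x => fderiv ℝ F x (Pi.single j 1) i) := fun i j => by
    filter_upwards [hUx] with x hx using hJ x hx i j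
  have hFj : ∀ j : Fin 3, HasFDerivAt (fun x => fderiv ℝ F x (Pi.single j 1))
      (f''.flip (Pi.single j 1)) x₀ := by
    intro j
    have := hf''.clm_apply (hasFDerivAt_const (Pi.single j 1 : Fin 3 → ℝ) x₀)
    simpa using this
  set L : Fin 3 → Fin 3 → ((Fin 3 → ℝ) →L[ℝ] ℝ) :=
    fun i j => (ContinuousLinearMap.proj i).comp (f''.flip (Pi.single j 1)) with hLdef
  have hJhas : ∀ i j : Fin 3, HasFDerivAt (fun x => J x i j) (L i j) x₀ := by
    intro i j
    refine HasFDerivAt.congr_of_eventuallyEq ?_ (hJcongr i j)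
    exact HasFDerivAt.comp (g := (ContinuousLinearMap.proj i : (Fin 3 → ℝ) →L[ℝ] ℝ))
      x₀ (ContinuousLinearMap.hasFDerivAt _) (hFj j)
  have hLval : ∀ i j k : Fin 3, L i j (Pi.single k 1) = f'' (Pi.single k 1) (Pi.single j 1) i := by
    intro i j k; simp [hLdef]
  -- derivatives of uhat components
  have huhatdiff : DifferentiableAt ℝ uhat x₀ := (huhat.contDiffAt hUx).differentiableAt one_ne_zero
  have hud : ∀ k : Fin 3, HasFDerivAt (fun x => uhat x k)
      (fderiv ℝ (fun x => uhat x k) x₀) x₀ := by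
    intro k
    exact (differentiableAt_pi.mp huhatdiff k).hasFDerivAt
  set M : Fin 3 → ((Fin 3 → ℝ) →L[ℝ] ℝ) := fun k => fderiv ℝ (fun x => uhat x k) x₀ with hMdef
  -- determinant: nonvanishing and derivative
  have hpne : (J x₀).det ≠ 0 := ((Matrix.isUnit_iff_isUnit_det _).mp (hJunit x₀ hx₀)).ne_zero
  have hdetfun : (fun x => (J x).det) = fun x =>
      J x 0 0 * J x 1 1 * J x 2 2 - J x 0 0 * J x 1 2 * J x 2 1
      - J x 0 1 * J x 1 0 * J x 2 2 + J x 0 1 * J x 1 2 * J x 2 0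
      + J x 0 2 * J x 1 0 * J x 2 1 - J x 0 2 * J x 1 1 * J x 2 0 := by
    funext x; rw [Matrix.det_fin_three]
  have hdethas : HasFDerivAt (fun x => (J x).det)
      ((((J x₀ 0 0 * J x₀ 1 1) • L 2 2 + J x₀ 2 2 • (J x₀ 0 0 • L 1 1 + J x₀ 1 1 • L 0 0))
      - ((J x₀ 0 0 * J x₀ 1 2) • L 2 1 + J x₀ 2 1 • (J x₀ 0 0 • L 1 2 + J x₀ 1 2 • L 0 0))
      - ((J x₀ 0 1 * J x₀ 1 0) • L 2 2 + J x₀ 2 2 • (J x₀ 0 1 • L 1 0 + J x₀ 1 0 • L 0 1))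
      + ((J x₀ 0 1 * J x₀ 1 2) • L 2 0 + J x₀ 2 0 • (J x₀ 0 1 • L 1 2 + J x₀ 1 2 • L 0 1))
      + ((J x₀ 0 2 * J x₀ 1 0) • L 2 1 + J x₀ 2 1 • (J x₀ 0 2 • L 1 0 + J x₀ 1 0 • L 0 2))
      - ((J x₀ 0 2 * J x₀ 1 1) • L 2 0 + J x₀ 2 0 • (J x₀ 0 2 • L 1 1 + J x₀ 1 1 • L 0 2)))) x₀ := by
    rw [hdetfun]
    exact (((((((hJhas 0 0).mul (hJhas 1 1)).mul (hJhas 2 2)).sub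
      (((hJhas 0 0).mul (hJhas 1 2)).mul (hJhas 2 1))).sub
      (((hJhas 0 1).mul (hJhas 1 0)).mul (hJhas 2 2))).add
      (((hJhas 0 1).mul (hJhas 1 2)).mul (hJhas 2 0))).add
      (((hJhas 0 2).mul (hJhas 1 0)).mul (hJhas 2 1))).sub
      (((hJhas 0 2).mul (hJhas 1 1)).mul (hJhas 2 0))
  set D := (((J x₀ 0 0 * J x₀ 1 1) • L 2 2 + J x₀ 2 2 • (J x₀ 0 0 • L 1 1 + J x₀ 1 1 • L 0 0))
      - ((J x₀ 0 0 * J x₀ 1 2) • L 2 1 + J x₀ 2 1 • (J x₀ 0 0 • L 1 2 + J x₀ 1 2 • L 0 0))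
      - ((J x₀ 0 1 * J x₀ 1 0) • L 2 2 + J x₀ 2 2 • (J x₀ 0 1 • L 1 0 + J x₀ 1 0 • L 0 1))
      + ((J x₀ 0 1 * J x₀ 1 2) • L 2 0 + J x₀ 2 0 • (J x₀ 0 1 • L 1 2 + J x₀ 1 2 • L 0 1))
      + ((J x₀ 0 2 * J x₀ 1 0) • L 2 1 + J x₀ 2 1 • (J x₀ 0 2 • L 1 0 + J x₀ 1 0 • L 0 2))
      - ((J x₀ 0 2 * J x₀ 1 1) • L 2 0 + J x₀ 2 0 • (J x₀ 0 2 • L 1 1 + J x₀ 1 1 • L 0 2))) with hDdef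
  -- derivative of 1/det
  have hg : HasFDerivAt (fun x => 1 / (J x).det) ((-(((J x₀).det)^2)⁻¹) • D) x₀ := by
    simp only [one_div]
    exact (hasDerivAt_inv hpne).comp_hasFDerivAt x₀ hdethas
  -- derivative of the components of v
  have hq : ∀ i : Fin 3, HasFDerivAt
      (fun x => J x i 0 * uhat x 0 + J x i 1 * uhat x 1 + J x i 2 * uhat x 2)
      (((J x₀ i 0 • M 0 + uhat x₀ 0 • L i 0) + (J x₀ i 1 • M 1 + uhat x₀ 1 • L i 1))
        + (J x₀ i 2 • M 2 + uhat x₀ 2 • L i 2)) x₀ := by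
    intro i
    exact (((hJhas i 0).mul (hud 0)).add ((hJhas i 1).mul (hud 1))).add ((hJhas i 2).mul (hud 2))
  set Q : Fin 3 → ((Fin 3 → ℝ) →L[ℝ] ℝ) := fun i =>
    ((J x₀ i 0 • M 0 + uhat x₀ 0 • L i 0) + (J x₀ i 1 • M 1 + uhat x₀ 1 • L i 1))
      + (J x₀ i 2 • M 2 + uhat x₀ 2 • L i 2) with hQdef
  set V : Fin 3 → ((Fin 3 → ℝ) →L[ℝ] ℝ) := fun i =>
    (1 / (J x₀).det) • Q i
      + (J x₀ i 0 * uhat x₀ 0 + J x₀ i 1 * uhat x₀ 1 + J x₀ i 2 * uhat x₀ 2) •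
        ((-(((J x₀).det)^2)⁻¹) • D) with hVdef
  have hvi : ∀ i : Fin 3, HasFDerivAt
      (fun x => (1 / (J x).det) * (J x i 0 * uhat x 0 + J x i 1 * uhat x 1 + J x i 2 * uhat x 2))
      (V i) x₀ := fun i => hg.mul (hq i)
  -- Finv and its derivative
  have hFinvdiff : DifferentiableAt ℝ Finv (F x₀) :=
    (hFinv.contDiffAt hΩy).differentiableAt two_ne_zero
  set B := fderiv ℝ Finv (F x₀) with hBdef
  have hB : HasFDerivAt Finv B (F x₀) := hFinvdiff.hasFDerivAt
  -- F ∘ Finv = id near F x₀ gives (fderiv F x₀).comp B = id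
  have hFFinv : HasFDerivAt F (fderiv ℝ F x₀) (Finv (F x₀)) := by
    rw [hleft x₀ hx₀]; exact (hFdiff x₀ hx₀).hasFDerivAt
  have hid : (fderiv ℝ F x₀).comp B = ContinuousLinearMap.id ℝ (Fin 3 → ℝ) := by
    have h1 : HasFDerivAt (fun y => F (Finv y)) ((fderiv ℝ F x₀).comp B) (F x₀) :=
      HasFDerivAt.comp (F x₀) hFFinv hB
    have h2 : HasFDerivAt (fun y => F (Finv y)) (ContinuousLinearMap.id ℝ (Fin 3 → ℝ)) (F x₀) := by
      refine (hasFDerivAt_id (F x₀)).congr_of_eventuallyEq ?_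
      filter_upwards [hΩy] with y hy using (hright y hy)
    exact h1.unique h2
  -- the matrix of B is the inverse of J x₀
  set Bm : Matrix (Fin 3) (Fin 3) ℝ := Matrix.of (fun p q => B (Pi.single q 1) p) with hBmdef
  have hBm : J x₀ * Bm = 1 := by
    ext i k
    have h1 : (J x₀ * Bm) i k = ∑ j, fderiv ℝ F x₀ (Pi.single j 1) i * B (Pi.single k 1) j := by
      rw [Matrix.mul_apply]
      exact Finset.sum_congr rfl fun j _ => by rw [hJ x₀ hx₀ i j]; rfl
    have h2 : fderiv ℝ F x₀ (B (Pi.single k 1)) i = ∑ j, B (Pi.single k 1) j *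
        fderiv ℝ F x₀ (Pi.single j 1) i := by
      rw [clm_eval3 (fderiv ℝ F x₀) (B (Pi.single k 1))]
      simp [Finset.sum_apply]
    have h3 : fderiv ℝ F x₀ (B (Pi.single k 1)) = Pi.single k 1 := by
      have := congrArg (fun (T : (Fin 3 → ℝ) →L[ℝ] (Fin 3 → ℝ)) => T (Pi.single k 1)) hid
      simpa using this
    rw [h1]
    rw [h3] at h2
    rw [show (∑ j, fderiv ℝ F x₀ (Pi.single j 1) i * B (Pi.single k 1) j)
      = ∑ j, B (Pi.single k 1) j * fderiv ℝ F x₀ (Pi.single j 1) i from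
      Finset.sum_congr rfl fun j _ => mul_comm _ _, ← h2]
    simp [Matrix.one_apply, Pi.single_apply, eq_comm]
  have hBminv : Bm = (J x₀)⁻¹ := (Matrix.inv_eq_right_inv hBm).symm
  -- u components agree with v ∘ Finv near F x₀
  have heq : ∀ i : Fin 3, (fun y => u y i) =ᶠ[nhds (F x₀)]
      (fun y => (1 / (J (Finv y)).det) *
        (J (Finv y) i 0 * uhat (Finv y) 0 + J (Finv y) i 1 * uhat (Finv y) 1
          + J (Finv y) i 2 * uhat (Finv y) 2)) := by
    intro i
    filter_upwards [hΩy] with y hy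
    conv_lhs => rw [← hright y hy]
    rw [hu (Finv y) (hFinvmaps hy)]
    simp [Matrix.mulVec, dotProduct, Fin.sum_univ_three, mul_add]
  -- chain rule for the components of u
  have hcomp : ∀ i : Fin 3, HasFDerivAt (fun y => u y i) ((V i).comp B) (F x₀) := by
    intro i
    have hviat : HasFDerivAt
        (fun x => (1 / (J x).det) * (J x i 0 * uhat x 0 + J x i 1 * uhat x 1 + J x i 2 * uhat x 2))
        (V i) (Finv (F x₀)) := by rw [hleft x₀ hx₀]; exact hvi i
    have h1 := HasFDerivAt.comp (F x₀) hviat hB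
    exact h1.congr_of_eventuallyEq (heq i)
  have hdivu : div3 u (F x₀) = ∑ i : Fin 3, ∑ j : Fin 3,
      ((J x₀)⁻¹ j i) • (V i) (Pi.single j 1) := by
    have : ∀ i : Fin 3, pd3 (fun y => u y i) i (F x₀)
        = ∑ j : Fin 3, ((J x₀)⁻¹ j i) • (V i) (Pi.single j 1) := by
      intro i
      have h1 : fderiv ℝ (fun y => u y i) (F x₀) = (V i).comp B := (hcomp i).fderiv
      have h2 : B (Pi.single i 1) = fun j => (J x₀)⁻¹ j i := by
        rw [← hBminv]; rfl
      rw [pd3, h1, ContinuousLinearMap.comp_apply, h2, clm_eval3]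
    rw [div3]
    exact Finset.sum_congr rfl fun i _ => this i
  have hdivuhat : div3 uhat x₀ = M 0 (Pi.single 0 1) + M 1 (Pi.single 1 1) + M 2 (Pi.single 2 1) := by
    rw [div3, Fin.sum_univ_three, pd3, pd3, pd3]
  -- inverse matrix via adjugate
  have hJinv : (J x₀)⁻¹ = ((J x₀).det)⁻¹ • (J x₀).adjugate := by
    rw [Matrix.inv_def, Ring.inverse_eq_inv']
  rw [hdivu, hdivuhat, hJinv]
  simp only [Fin.sum_univ_three, Matrix.smul_apply, Matrix.adjugate_fin_three, Matrix.cons_val',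
    Matrix.cons_val_zero, Matrix.cons_val_one, Matrix.head_cons, Matrix.head_fin_const,
    Matrix.empty_val', Matrix.cons_val_fin_one, smul_eq_mul, hVdef, hQdef, hDdef,
    ContinuousLinearMap.add_apply, ContinuousLinearMap.sub_apply,
    ContinuousLinearMap.smul_apply, hLval, one_div, Matrix.cons_val_two, Matrix.tail_cons, Matrix.of_apply]
  have hpne' : J x₀ 0 0 * J x₀ 1 1 * J x₀ 2 2 - J x₀ 0 0 * J x₀ 1 2 * J x₀ 2 1
      - J x₀ 0 1 * J x₀ 1 0 * J x₀ 2 2 + J x₀ 0 1 * J x₀ 1 2 * J x₀ 2 0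
      + J x₀ 0 2 * J x₀ 1 0 * J x₀ 2 1 - J x₀ 0 2 * J x₀ 1 1 * J x₀ 2 0 ≠ 0 := by
    rw [← Matrix.det_fin_three]; exact hpne
  field_simp
  simp only [Matrix.det_fin_three (J x₀)]
  simp only [hsymm (Pi.single 1 1) (Pi.single 0 1), hsymm (Pi.single 2 1) (Pi.single 0 1),
    hsymm (Pi.single 2 1) (Pi.single 1 1)]
  ring
end

section
/- Let κ₀ ∈ ℂ with κ₀ ≠ 0, let u : [0,∞) → ℂ be continuous with compact support, and define U(z) = (1/(z−1)) ∫₀^∞ u(ξ) e^{−s(z)ξ} dξ for |z| < 1, where s(z) = iκ₀(z+1)/(z−1). Then U is complex differentiable on the open unit disk and for every z with |z| < 1: ((z−1)²/(2iκ₀)) U'(z) + (1 + (z−1)/(2iκ₀)) U(z) = (1/(z−1)) ∫₀^∞ (1+ξ) u(ξ) e^{−s(z)ξ} dξ. (That is, the operator D defined by the left-hand side satisfies D(MLu) = ML((1+ξ)u).) -/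
open MeasureTheory Metric Complex

private lemma integrable_aux11 {v : ℝ → ℂ} (hv : Continuous v)
    (hvs : HasCompactSupport v) (c : ℂ) :
    Integrable (fun ξ : ℝ => v ξ * Complex.exp (-(c * ξ)))
      (volume.restrict (Set.Ioi (0:ℝ))) := by
  have hcont : Continuous fun ξ : ℝ => v ξ * Complex.exp (-(c * ξ)) :=
    hv.mul (Complex.continuous_exp.comp
      ((continuous_const.mul Complex.continuous_ofReal).neg))
  have hcs : HasCompactSupport fun ξ : ℝ => v ξ * Complex.exp (-(c * ξ)) :=
    hvs.mul_right
  exact (hcont.integrable_of_hasCompactSupport hcs).restrict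

/-- The operator `D` realizes multiplication by `(1+ξ)` under the Laplace–Möbius
transform: `U = MLu` is holomorphic on the unit disk and
`((z−1)²/(2iκ₀)) U' + (1 + (z−1)/(2iκ₀)) U = ML((1+ξ)u)`. -/
theorem stmt11 (κ₀ : ℂ) (hκ : κ₀ ≠ 0) (u : ℝ → ℂ)
    (hu : Continuous u) (hsupp : HasCompactSupport u)
    (s : ℂ → ℂ) (hs : ∀ z, s z = Complex.I * κ₀ * (z + 1) / (z - 1))
    (U : ℂ → ℂ)
    (hU : ∀ z, U z = (1 / (z - 1)) * ∫ ξ in Set.Ioi (0 : ℝ),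
      u ξ * Complex.exp (-(s z * ξ))) :
    DifferentiableOn ℂ U {z : ℂ | ‖z‖ < 1} ∧
    ∀ z : ℂ, ‖z‖ < 1 →
      ((z - 1) ^ 2 / (2 * Complex.I * κ₀)) * deriv U z
          + (1 + (z - 1) / (2 * Complex.I * κ₀)) * U z
        = (1 / (z - 1)) * ∫ ξ in Set.Ioi (0 : ℝ),
            (1 + ξ : ℂ) * u ξ * Complex.exp (-(s z * ξ)) := by
  have hsfun : s = fun z => Complex.I * κ₀ * (z + 1) / (z - 1) := funext hs
  subst hsfun
  set S : ℂ → ℂ := fun z => Complex.I * κ₀ * (z + 1) / (z - 1) with hS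
  -- support radius
  obtain ⟨R, hR0, hR⟩ := hsupp.exists_pos_le_norm
  -- basic nonvanishing
  have hz1 : ∀ z : ℂ, ‖z‖ < 1 → z - 1 ≠ 0 := by
    intro z hz
    intro h
    have : z = 1 := by linear_combination h
    rw [this] at hz; simp at hz
  -- derivative of S
  have hSderiv : ∀ z : ℂ, ‖z‖ < 1 →
      HasDerivAt S (-2 * Complex.I * κ₀ / (z - 1) ^ 2) z := by
    intro z hz
    have h1 : HasDerivAt (fun w : ℂ => Complex.I * κ₀ * (w + 1)) (Complex.I * κ₀) z := by
      simpa using ((hasDerivAt_id z).add_const 1).const_mul (Complex.I * κ₀)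
    have h2 : HasDerivAt (fun w : ℂ => w - 1) 1 z := (hasDerivAt_id z).sub_const 1
    have := h1.div h2 (hz1 z hz)
    exact this.congr_deriv (by ring)
  -- the key derivative of the parametric integral
  have key : ∀ z : ℂ, ‖z‖ < 1 →
      HasDerivAt (fun w => ∫ ξ in Set.Ioi (0:ℝ), u ξ * Complex.exp (-(S w * ξ)))
        (∫ ξ in Set.Ioi (0:ℝ),
          u ξ * (Complex.exp (-(S z * ξ)) * (-(-2 * Complex.I * κ₀ / (z - 1) ^ 2 * ξ)))) z := by
    intro z₀ hz₀
    set ε : ℝ := (1 - ‖z₀‖) / 2 with hε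
    have hεpos : 0 < ε := by
      have := hz₀; simp only [hε]; linarith
    have hball : ∀ x ∈ closedBall z₀ ε, ‖x‖ < 1 := by
      intro x hx
      have h1 : dist x z₀ ≤ ε := mem_closedBall.mp hx
      have h2 : ‖x‖ ≤ ‖z₀‖ + ε := by
        have htri := norm_add_le (x - z₀) z₀
        rw [sub_add_cancel] at htri
        have hd : ‖x - z₀‖ = dist x z₀ := by rw [Complex.dist_eq]
        rw [hd] at htri
        linarith
      simp only [hε] at h2 ⊢
      linarith
    -- bound on compact set
    set φ : ℂ × ℝ → ℝ := fun p =>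
      ‖Complex.exp (-(S p.1 * p.2)) * (-2 * Complex.I * κ₀ / (p.1 - 1) ^ 2 * p.2)‖ with hφ
    have hKc : IsCompact (closedBall z₀ ε ×ˢ Set.Icc (0:ℝ) R) :=
      (isCompact_closedBall _ _).prod isCompact_Icc
    have hφcont : ContinuousOn φ (closedBall z₀ ε ×ˢ Set.Icc (0:ℝ) R) := by
      have hne : ∀ p ∈ closedBall z₀ ε ×ˢ Set.Icc (0:ℝ) R, (p.1 - 1 : ℂ) ≠ 0 := by
        intro p hp
        exact hz1 p.1 (hball p.1 hp.1)
      have hScont : ContinuousOn (fun p : ℂ × ℝ => S p.1)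
          (closedBall z₀ ε ×ˢ Set.Icc (0:ℝ) R) := by
        apply ContinuousOn.div
        · fun_prop
        · fun_prop
        · exact hne
      apply ContinuousOn.norm
      apply ContinuousOn.mul
      · exact Complex.continuous_exp.comp_continuousOn
          ((hScont.mul (by fun_prop)).neg)
      · apply ContinuousOn.mul
        · apply ContinuousOn.div
          · fun_prop
          · fun_prop
          · intro p hp; exact pow_ne_zero 2 (hne p hp)
        · fun_prop
    obtain ⟨C, hC⟩ := hKc.exists_bound_of_continuousOn hφcont
    refine (hasDerivAt_integral_of_dominated_loc_of_deriv_le (μ := volume.restrict (Set.Ioi (0:ℝ)))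
      (F := fun x (a : ℝ) => u a * Complex.exp (-(S x * a)))
      (F' := fun x (a : ℝ) =>
        u a * (Complex.exp (-(S x * a)) * (-(-2 * Complex.I * κ₀ / (x - 1) ^ 2 * a))))
      (bound := fun a => C * ‖u a‖) (s := ball z₀ ε) (ball_mem_nhds z₀ hεpos) ?_ ?_ ?_ ?_ ?_ ?_).2
    · filter_upwards with x
      exact ((hu.mul (Complex.continuous_exp.comp
        ((continuous_const.mul Complex.continuous_ofReal).neg))).aestronglyMeasurable)
    · exact integrable_aux11 hu hsupp (S z₀)
    · apply Continuous.aestronglyMeasurable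
      exact hu.mul ((Complex.continuous_exp.comp
        ((continuous_const.mul Complex.continuous_ofReal).neg)).mul
        ((continuous_const.mul Complex.continuous_ofReal).neg))
    · -- bound
      filter_upwards [ae_restrict_mem measurableSet_Ioi] with a ha x hx
      by_cases hle : a ≤ R
      · have hmem : (x, a) ∈ closedBall z₀ ε ×ˢ Set.Icc (0:ℝ) R :=
          ⟨ball_subset_closedBall hx, le_of_lt ha, hle⟩
        have := hC (x, a) hmem
        calc ‖u a * (Complex.exp (-(S x * a)) * (-(-2 * Complex.I * κ₀ / (x - 1) ^ 2 * a)))‖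
            = ‖u a‖ * φ (x, a) := by
              simp only [hφ, norm_mul, norm_neg]
          _ ≤ ‖u a‖ * C := by
              apply mul_le_mul_of_nonneg_left _ (norm_nonneg _)
              exact (le_abs_self _).trans (by simpa using this)
          _ = C * ‖u a‖ := mul_comm _ _
      · have hu0 : u a = 0 := hR a (by rw [Real.norm_eq_abs, abs_of_pos ha]; linarith)
        simp [hu0]
    · -- bound integrable
      exact (((hu.norm.integrable_of_hasCompactSupport hsupp.norm).restrict
        (s := Set.Ioi 0)).const_mul C)
    · -- differentiability
      filter_upwards with a x hx
      have hx1 : ‖x‖ < 1 := hball x (ball_subset_closedBall hx)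
      have hE : HasDerivAt (fun w => Complex.exp (-(S w * a)))
          (Complex.exp (-(S x * a)) * (-(-2 * Complex.I * κ₀ / (x - 1) ^ 2 * a))) x :=
        (((hSderiv x hx1).mul_const (a:ℂ)).neg).cexp
      exact hE.const_mul (u a)
  -- rewrite U
  have hUfun : U = fun z => (z - 1)⁻¹ * ∫ ξ in Set.Ioi (0:ℝ),
      u ξ * Complex.exp (-(S z * ξ)) := by
    funext z; rw [hU z, one_div]
  have hUderiv : ∀ z : ℂ, ‖z‖ < 1 →
      HasDerivAt U
        (-1 / (z - 1) ^ 2 * (∫ ξ in Set.Ioi (0:ℝ), u ξ * Complex.exp (-(S z * ξ)))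
          + (z - 1)⁻¹ * ∫ ξ in Set.Ioi (0:ℝ),
            u ξ * (Complex.exp (-(S z * ξ)) * (-(-2 * Complex.I * κ₀ / (z - 1) ^ 2 * ξ)))) z := by
    intro z hz
    rw [hUfun]
    have hinv : HasDerivAt (fun w : ℂ => (w - 1)⁻¹) (-1 / (z - 1) ^ 2) z := by
      have := ((hasDerivAt_id z).sub_const 1).inv (hz1 z hz)
      exact this
    exact hinv.mul (key z hz)
  constructor
  · intro z hz
    exact ((hUderiv z hz).differentiableAt).differentiableWithinAt
  · intro z hz
    rw [(hUderiv z hz).deriv, hU z]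
    have hint1 : Integrable (fun ξ : ℝ => u ξ * Complex.exp (-(S z * ξ)))
        (volume.restrict (Set.Ioi (0:ℝ))) := integrable_aux11 hu hsupp (S z)
    have hint2 : Integrable (fun ξ : ℝ => ((ξ:ℂ) * u ξ) * Complex.exp (-(S z * ξ)))
        (volume.restrict (Set.Ioi (0:ℝ))) :=
      integrable_aux11 (Complex.continuous_ofReal.mul hu) (hsupp.mul_left) (S z)
    have hsplit : (∫ ξ in Set.Ioi (0:ℝ), (1 + ξ : ℂ) * u ξ * Complex.exp (-(S z * ξ)))
        = (∫ ξ in Set.Ioi (0:ℝ), u ξ * Complex.exp (-(S z * ξ)))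
          + ∫ ξ in Set.Ioi (0:ℝ), ((ξ:ℂ) * u ξ) * Complex.exp (-(S z * ξ)) := by
      rw [← integral_add hint1 hint2]
      congr 1; funext ξ; ring
    have hval : (∫ ξ in Set.Ioi (0:ℝ),
          u ξ * (Complex.exp (-(S z * ξ)) * (-(-2 * Complex.I * κ₀ / (z - 1) ^ 2 * ξ))))
        = (2 * Complex.I * κ₀ / (z - 1) ^ 2) *
          ∫ ξ in Set.Ioi (0:ℝ), ((ξ:ℂ) * u ξ) * Complex.exp (-(S z * ξ)) := by
      rw [← integral_const_mul]
      congr 1; funext ξ; ring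
    rw [hsplit, hval]
    have h1 : (z - 1) ≠ 0 := hz1 z hz
    have h2 : (2 : ℂ) * Complex.I * κ₀ ≠ 0 := by
      simp [hκ, Complex.I_ne_zero]
    generalize (∫ ξ in Set.Ioi (0:ℝ), u ξ * Complex.exp (-(S z * ξ))) = A
    generalize (∫ ξ in Set.Ioi (0:ℝ), ((ξ:ℂ) * u ξ) * Complex.exp (-(S z * ξ))) = B
    have hI : Complex.I ≠ 0 := Complex.I_ne_zero
    obtain ⟨w, hw⟩ : ∃ w : ℂ, w = z - 1 := ⟨_, rfl⟩
    rw [← hw] at h1 ⊢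
    field_simp [h1, hκ, hI]
    have e1 : w ^ 6 * w⁻¹ ^ 6 = 1 := by
      rw [← mul_pow, mul_inv_cancel₀ h1, one_pow]
    have e2 : Complex.I ^ 2 * Complex.I⁻¹ ^ 2 = 1 := by
      rw [← mul_pow, mul_inv_cancel₀ hI, one_pow]
    have e3 : κ₀ ^ 2 * κ₀⁻¹ ^ 2 = 1 := by
      rw [← mul_pow, mul_inv_cancel₀ hκ, one_pow]
    ring
end

section
/- Let κ₀ ∈ ℂ with κ₀ ≠ 0, let u : [0,∞) → ℂ be continuously differentiable with compact support, and define U(z) = (1/(z−1)) ∫₀^∞ u(ξ) e^{−s(z)ξ} dξ for |z| < 1, where s(z) = iκ₀(z+1)/(z−1). Then for every z with |z| < 1: (1/(z−1)) ∫₀^∞ u'(ξ) e^{−s(z)ξ} dξ = ½ ( u(0) + (z+1)·(2iκ₀ U(z) − u(0))/(z−1) ). (That is, writing MLu = (1/(iκ₀)) T₋(u(0), Û) with Û(z) = (2iκ₀ U(z) − u(0))/(z−1), one has ML(∂_ξ u) = T₊(u(0), Û).) -/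
open MeasureTheory

lemma key_ibp (u : ℝ → ℂ) (hu : ContDiff ℝ 1 u) (hsupp : HasCompactSupport u) (c : ℂ) :
    ∫ ξ in Set.Ioi (0 : ℝ), deriv u ξ * Complex.exp (-(c * ξ))
      = -(u 0) + c * ∫ ξ in Set.Ioi (0 : ℝ), u ξ * Complex.exp (-(c * ξ)) := by
  have hcu : Continuous u := hu.continuous
  have hcd : Continuous (deriv u) := (hu.continuous_deriv le_rfl)
  have hce : Continuous fun ξ : ℝ => Complex.exp (-(c * ξ)) := by fun_prop
  have hde : ∀ ξ : ℝ, HasDerivAt (fun ξ : ℝ => Complex.exp (-(c * ξ)))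
      (-c * Complex.exp (-(c * ξ))) ξ := by
    intro ξ
    have h1 : HasDerivAt (fun w : ℂ => Complex.exp (-(c * w)))
        (-c * Complex.exp (-(c * (ξ : ℂ)))) (ξ : ℂ) := by
      have := (((hasDerivAt_id ((ξ : ℝ) : ℂ)).const_mul c).neg).cexp
      simpa [mul_comm] using this
    exact h1.comp_ofReal
  have hderiv : ∀ ξ : ℝ, HasDerivAt (fun ξ : ℝ => u ξ * Complex.exp (-(c * ξ)))
      (deriv u ξ * Complex.exp (-(c * ξ)) + u ξ * (-c * Complex.exp (-(c * ξ)))) ξ := by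
    intro ξ
    exact ((hu.differentiable one_ne_zero ξ).hasDerivAt).mul (hde ξ)
  have hi1 : IntegrableOn (fun ξ : ℝ => deriv u ξ * Complex.exp (-(c * ξ)))
      (Set.Ioi (0 : ℝ)) := by
    exact ((hcd.mul hce).integrable_of_hasCompactSupport
      (hsupp.deriv.mul_right)).integrableOn
  have hi2 : IntegrableOn (fun ξ : ℝ => u ξ * (-c * Complex.exp (-(c * ξ))))
      (Set.Ioi (0 : ℝ)) := by
    exact ((hcu.mul (continuous_const.mul hce)).integrable_of_hasCompactSupport
      (hsupp.mul_right)).integrableOn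
  have htend : Filter.Tendsto (fun ξ : ℝ => u ξ * Complex.exp (-(c * ξ)))
      Filter.atTop (nhds 0) := by
    have h0 : ∀ᶠ ξ in Filter.atTop, u ξ = 0 := by
      have := hsupp.is_zero_at_infty
      have h2 : ∀ᶠ ξ in Filter.cocompact ℝ, u ξ = 0 := by
        filter_upwards [hsupp.isCompact.compl_mem_cocompact] with x hx
        exact image_eq_zero_of_notMem_tsupport hx
      exact h2.filter_mono atTop_le_cocompact
    refine Filter.Tendsto.congr' ?_ tendsto_const_nhds
    filter_upwards [h0] with x hx
    simp [hx]
  have hFTC := integral_Ioi_of_hasDerivAt_of_tendsto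
    (f := fun ξ : ℝ => u ξ * Complex.exp (-(c * ξ)))
    (f' := fun ξ : ℝ => deriv u ξ * Complex.exp (-(c * ξ)) + u ξ * (-c * Complex.exp (-(c * ξ))))
    (a := 0) (m := 0)
    ((hderiv 0).continuousAt.continuousWithinAt)
    (fun x _ => hderiv x) (hi1.add hi2) htend
  rw [integral_add hi1 hi2] at hFTC
  simp only [Complex.ofReal_zero, mul_zero, neg_zero, Complex.exp_zero, mul_one,
    zero_sub] at hFTC
  have : ∫ ξ in Set.Ioi (0 : ℝ), u ξ * (-c * Complex.exp (-(c * ξ)))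
      = -c * ∫ ξ in Set.Ioi (0 : ℝ), u ξ * Complex.exp (-(c * ξ)) := by
    rw [← integral_const_mul]
    congr 1; ext ξ; ring
  rw [this] at hFTC
  linear_combination hFTC

/-- Transformation of the derivative under the Laplace–Möbius transform:
`ML(∂_ξ u)(z) = ½(u(0) + (z+1)·(2iκ₀ U(z) − u(0))/(z−1))`, i.e. writing
`MLu = (1/(iκ₀)) T₋(u(0), Û)` one has `ML(∂_ξ u) = T₊(u(0), Û)`. -/
theorem stmt13 (κ₀ : ℂ) (hκ : κ₀ ≠ 0) (u : ℝ → ℂ)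
    (hu : ContDiff ℝ 1 u) (hsupp : HasCompactSupport u)
    (s : ℂ → ℂ) (hs : ∀ z, s z = Complex.I * κ₀ * (z + 1) / (z - 1))
    (U : ℂ → ℂ)
    (hU : ∀ z, U z = (1 / (z - 1)) * ∫ ξ in Set.Ioi (0 : ℝ),
      u ξ * Complex.exp (-(s z * ξ))) :
    ∀ z : ℂ, ‖z‖ < 1 →
      (1 / (z - 1)) * ∫ ξ in Set.Ioi (0 : ℝ), deriv u ξ * Complex.exp (-(s z * ξ))
        = (1 / 2) * (u 0 + (z + 1) * ((2 * Complex.I * κ₀ * U z - u 0) / (z - 1))) := by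
  intro z hz
  have hz1 : z - 1 ≠ 0 := by
    intro h
    have : z = 1 := by linear_combination h
    rw [this] at hz; simp at hz
  have hkey := key_ibp u hu hsupp (s z)
  rw [hkey, hU z, hs z]
  field_simp
  ring
end
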